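/- Let G be a DAG whose vertex set is a finite set V of classical split nodes and let Y, Z, W, X be pairwise disjoint subsets of V, with R := V ∖ (Y∪Z∪W∪X). Let G_{X̄} be the DAG obtained from G by deleting every arrow whose head lies in X. If Y and Z are d-separated by W∪X in G_{X̄}, then for every classical process map κ over V that is Markov for G and every local trace-preserving intervention τ_R at R, the do-conditional marginal κ^{τ_R}_{YZW do(X)} := ∑_{X^in} ∑_{R variables} [κ · τ_R] — a function of the Y, Z, W variables together with the output variables X^out — factorizes as α·β, where α is a real-valued function of (Y^in, Y^out, W^in, W^out, X^out) only and β is a real-valued function of (Z^in, Z^out, W^in, W^out, X^out) only. -/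

import Mathlib

open scoped Classical
open BigOperators

noncomputable section

namespace QCM

instance setFintypeOfFintype {α : Type} [Fintype α] (S : Set α) : Fintype ↥S :=
  (Set.toFinite S).fintype

/-! ## Classical split nodes -/

/-- A joint assignment of values to the input (`false`) and output (`true`) variables
of a family of classical split nodes. -/
abbrev CAsg (V : Type) (val : V → ℕ) : Type := ∀ p : V × Bool, Fin (val p.1)

/-- `F` depends only on the variables (legs) in `L`. -/
def DependsOnlyOn {V : Type} {val : V → ℕ} (L : Set (V × Bool))
    (F : CAsg V val → ℝ) : Prop :=
  ∀ ω ω' : CAsg V val, (∀ p ∈ L, ω p = ω' p) → F ω = F ω'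

/-- A classical channel `P(out | in)` on a set of cardinality `n`. -/
def IsCChannel {n : ℕ} (P : Fin n → Fin n → ℝ) : Prop :=
  (∀ i o, 0 ≤ P i o) ∧ ∀ i, ∑ o, P i o = 1

/-- A classical process map over the split nodes `V`. -/
def IsCProcess {V : Type} [Fintype V] (val : V → ℕ) (κ : CAsg V val → ℝ) : Prop :=
  (∀ ω, 0 ≤ κ ω ∧ κ ω ≤ 1) ∧
    ∀ chan : ∀ a, Fin (val a) → Fin (val a) → ℝ, (∀ a, IsCChannel (chan a)) →
      ∑ ω : CAsg V val, κ ω * ∏ a, chan a (ω (a, false)) (ω (a, true)) = 1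

/-- A classical instrument `P(k, out | in)` with outcomes in `Fin m`. -/
def IsCInstrument {n m : ℕ} (q : Fin m → Fin n → Fin n → ℝ) : Prop :=
  (∀ k i o, 0 ≤ q k i o) ∧ ∀ i, ∑ k, ∑ o, q k i o = 1

/-- A maximally informative classical instrument. -/
def IsMaxInf {n m : ℕ} (q : Fin m → Fin n → Fin n → ℝ) : Prop :=
  ∃ gin : Fin m → Fin n, Function.Surjective gin ∧
    ∃ gout : Fin m → Fin n, ∀ k i o, q k i o ≠ 0 → i = gin k ∧ o = gout k

/-- Override the assignment `ω` on the legs in `T` by the values `t`. -/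
def ovr {V : Type} {val : V → ℕ} (T : Set (V × Bool)) (ω : CAsg V val)
    (t : ∀ p : ↥T, Fin (val p.1.1)) : CAsg V val :=
  fun p => if h : p ∈ T then t ⟨p, h⟩ else ω p


/-! ## DAGs and d-separation -/

/-- `G` is a directed acyclic graph. -/
def IsDAG {V : Type} (G : V → V → Prop) : Prop := ∀ v, ¬ Relation.TransGen G v v

/-- A path in `G`: a list of distinct vertices, consecutive ones joined by an arrow
of `G` in either direction. -/
def IsTrail {V : Type} (G : V → V → Prop) (p : List V) : Prop :=
  p.Nodup ∧ p.Chain' fun a b => G a b ∨ G b a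

/-- The path `p` is blocked by the set `W`. -/
def Blocked {V : Type} (G : V → V → Prop) (W : Set V) (p : List V) : Prop :=
  ∃ (i : ℕ) (a w c : V),
    p[i]? = some a ∧ p[i+1]? = some w ∧ p[i+2]? = some c ∧
    ((((G a w ∧ G w c) ∨ (G c w ∧ G w a) ∨ (G w a ∧ G w c)) ∧ w ∈ W) ∨
      ((G a w ∧ G c w) ∧ ∀ r, (r = w ∨ Relation.TransGen G w r) → r ∉ W))

/-- d-separation of `Y` and `Z` by `W` in `G`. -/
def DSep {V : Type} (G : V → V → Prop) (Y Z W : Set V) : Prop :=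
  ∀ p : List V, IsTrail G p →
    (∃ y ∈ Y, p.head? = some y) → (∃ z ∈ Z, p.getLast? = some z) → Blocked G W p

/-- The classical split-node Markov condition for `κ` with respect to `G`. -/
def CMarkovFor {V : Type} [Fintype V] (val : V → ℕ) (G : V → V → Prop)
    (κ : CAsg V val → ℝ) : Prop :=
  ∃ p : ∀ i : V, (∀ j : {j // G j i}, Fin (val j.1)) → Fin (val i) → ℝ,
    (∀ i pa xi, 0 ≤ p i pa xi) ∧ (∀ i pa, ∑ xi, p i pa xi = 1) ∧
    ∀ ω : CAsg V val, κ ω = ∏ i, p i (fun j => ω (j.1, true)) (ω (i, false))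

/-- The do-conditional marginal `κ^{τ_R}_{YZW do(X)}`: the input variables of the
nodes in `SX` and all variables of the nodes in `T` are summed out, the variables of
`T` being weighted by the channels `locT`.  The result is a function of the remaining
variables only. -/
def cDoMarg {V : Type} [Fintype V] (val : V → ℕ) (κ : CAsg V val → ℝ) (SX T : Set V)
    (locT : ∀ a, Fin (val a) → Fin (val a) → ℝ) (ω : CAsg V val) : ℝ :=
  ∑ t : (∀ p : ↥{p : V × Bool | (p.1 ∈ SX ∧ p.2 = false) ∨ p.1 ∈ T}, Fin (val p.1.1)),
    κ (ovr {p : V × Bool | (p.1 ∈ SX ∧ p.2 = false) ∨ p.1 ∈ T} ω t) *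
      ∏ a : ↥T, locT a.1 (t ⟨(a.1, false), Or.inr a.2⟩) (t ⟨(a.1, true), Or.inr a.2⟩)

/-! ## Auxiliary combinatorial machinery -/

section Comb

variable {V : Type}

/-- list of consecutive triples -/
def trip : List V → List (V × V × V)
  | a :: w :: c :: l => (a, w, c) :: trip (w :: c :: l)
  | _ => []

@[simp] lemma trip_nil : trip ([] : List V) = [] := rfl
@[simp] lemma trip_single (a : V) : trip [a] = [] := rfl
@[simp] lemma trip_pair (a b : V) : trip [a, b] = [] := rfl
@[simp] lemma trip_cons3 (a w c : V) (l : List V) :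
    trip (a :: w :: c :: l) = (a, w, c) :: trip (w :: c :: l) := rfl

lemma trip_append_cons : ∀ (xs : List V) (a w : V) (l : List V),
    trip (xs ++ a :: w :: l) = trip (xs ++ [a, w]) ++ trip (a :: w :: l)
  | [], a, w, l => by simp
  | [x], a, w, l => by simp
  | x :: y :: xs, a, w, l => by
      cases xs with
      | nil => simp
      | cons u us =>
          have ih := trip_append_cons (y :: u :: us) a w l
          simp only [List.cons_append] at ih ⊢
          rw [trip_cons3, trip_cons3, ih]
          simp

lemma trip_mem_append_left : ∀ (xs : List V) (ys : List V) (t : V × V × V),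
    t ∈ trip xs → t ∈ trip (xs ++ ys)
  | a :: w :: c :: l, ys, t, ht => by
      simp only [trip_cons3, List.mem_cons] at ht
      rcases ht with h | h
      · simp [h]
      · have := trip_mem_append_left (w :: c :: l) ys t h
        simp only [List.cons_append] at this ⊢
        rw [trip_cons3]
        exact List.mem_cons_of_mem _ this
  | [], _, t, ht => by simp at ht
  | [a], _, t, ht => by simp at ht
  | [a, b], _, t, ht => by simp at ht

lemma trip_mem_append_right (xs : List V) {ys : List V} {t : V × V × V}
    (ht : t ∈ trip ys) : t ∈ trip (xs ++ ys) := by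
  match ys, ht with
  | a :: w :: l, ht => rw [trip_append_cons]; exact List.mem_append_right _ ht
  | [], ht => simp at ht
  | [a], ht => simp at ht

lemma mem_trip_of_getElem : ∀ (p : List V) (i : ℕ) (a w c : V),
    p[i]? = some a → p[i+1]? = some w → p[i+2]? = some c → (a, w, c) ∈ trip p
  | [], i, a, w, c, h1, _, _ => by simp at h1
  | x :: q, 0, a, w, c, h1, h2, h3 => by
      simp only [List.getElem?_cons_zero, Option.some_inj] at h1
      simp only [List.getElem?_cons_succ] at h2 h3
      match q, h2, h3 with
      | w' :: q', h2, h3 =>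
        simp only [List.getElem?_cons_zero, Option.some_inj] at h2
        simp only [List.getElem?_cons_succ] at h3
        match q', h3 with
        | c' :: q'', h3 =>
          simp only [List.getElem?_cons_zero, Option.some_inj] at h3
          subst h1 h2 h3
          simp
  | x :: q, (i+1), a, w, c, h1, h2, h3 => by
      simp only [List.getElem?_cons_succ] at h1 h2 h3
      have := mem_trip_of_getElem q i a w c h1 h2 h3
      match q, this with
      | w' :: c' :: q', h =>
        rw [trip_cons3]
        exact List.mem_cons_of_mem _ h

lemma trip_mem_structure : ∀ (p : List V) (t : V × V × V), t ∈ trip p →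
    ∃ l1 l2, p = l1 ++ [t.1, t.2.1, t.2.2] ++ l2
  | a :: w :: c :: l, t, ht => by
      simp only [trip_cons3, List.mem_cons] at ht
      rcases ht with h | h
      · exact ⟨[], l, by simp [h]⟩
      · obtain ⟨l1, l2, hl⟩ := trip_mem_structure (w :: c :: l) t h
        exact ⟨a :: l1, l2, by simp [hl]⟩
  | [], t, ht => by simp at ht
  | [a], t, ht => by simp at ht
  | [a, b], t, ht => by simp at ht

/-- triples of `q ++ [c]` are triples of `q` or end with `c`. -/
lemma trip_concat : ∀ (q : List V) (c : V) (t : V × V × V), t ∈ trip (q ++ [c]) →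
    t ∈ trip q ∨ ∃ l1, q = l1 ++ [t.1, t.2.1] ∧ t.2.2 = c
  | a :: w :: rest, c, t, ht => by
      cases rest with
      | nil =>
          simp only [List.cons_append, List.nil_append, trip_cons3, trip_pair,
            List.mem_cons, List.not_mem_nil, or_false] at ht
          subst ht
          exact Or.inr ⟨[], by simp⟩
      | cons r rest' =>
          simp only [List.cons_append, trip_cons3, List.mem_cons] at ht
          rcases ht with h | h
          · left; simp [h]
          · have := trip_concat (w :: r :: rest') c t (by simpa using h)
            rcases this with h' | ⟨l1, hl1, hc⟩
            · left; rw [trip_cons3]; exact List.mem_cons_of_mem _ h'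
            · exact Or.inr ⟨a :: l1, by simp [hl1], hc⟩
  | [], c, t, ht => by simp at ht
  | [a], c, t, ht => by simp at ht

/-- triples of `a :: q` have their last two entries consecutive in `q`. -/
lemma trip_cons_struct : ∀ (a : V) (q : List V) (t : V × V × V), t ∈ trip (a :: q) →
    ∃ l1 l2, q = l1 ++ [t.2.1, t.2.2] ++ l2
  | a, w :: c :: l, t, ht => by
      simp only [trip_cons3, List.mem_cons] at ht
      rcases ht with h | h
      · exact ⟨[], l, by simp [h]⟩
      · obtain ⟨l1, l2, hl⟩ := trip_cons_struct w (c :: l) t h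
        exact ⟨w :: l1, l2, by simp [hl]⟩
  | a, [], t, ht => by simp at ht
  | a, [b], t, ht => by simp at ht

variable (G' : V → V → Prop) (W' : Set V)

/-- some descendant-or-self lies in `W'` -/
def DescBad (w : V) : Prop := ∃ r, (r = w ∨ Relation.TransGen G' w r) ∧ r ∈ W'
/-- collider pattern -/
def IsCol (t : V × V × V) : Prop := G' t.1 t.2.1 ∧ G' t.2.2 t.2.1
def InvT (t : V × V × V) : Prop := ¬ IsCol G' t → t.2.1 ∉ W'
def GoodT (t : V × V × V) : Prop := InvT G' W' t ∧ (IsCol G' t → DescBad G' W' t.2.1)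
def BadT (t : V × V × V) : Prop := IsCol G' t ∧ ¬ DescBad G' W' t.2.1
def nbadW (p : List V) : ℕ := (trip p).countP (fun t => decide (BadT G' W' t))
def Esym (a b : V) : Prop := G' a b ∨ G' b a

lemma noback (hacyc : ∀ v, ¬ Relation.TransGen G' v v) {a b : V} (h : G' a b) : ¬ G' b a :=
  fun h' => hacyc a ((Relation.TransGen.single h).trans (Relation.TransGen.single h'))

lemma descBad_lift {v w : V} (h : G' v w) (hd : DescBad G' W' w) : DescBad G' W' v := by
  obtain ⟨r, hr, hrW⟩ := hd
  refine ⟨r, Or.inr ?_, hrW⟩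
  rcases hr with rfl | hr
  · exact Relation.TransGen.single h
  · exact Relation.TransGen.head h hr

lemma chain'_pair {α : Type} {r : α → α → Prop} {l1 l2 : List α} {x y : α}
    (hc : List.Chain' r (l1 ++ x :: y :: l2)) : r x y := by
  have := hc.right_of_append (l₁ := l1)
  exact (List.isChain_cons_cons.mp this).1

lemma chain'_middle {α : Type} {r : α → α → Prop} {l1 l2 : List α} {x y z : α}
    (hc : List.Chain' r (l1 ++ x :: y :: z :: l2)) : r x y ∧ r y z := by
  refine ⟨chain'_pair (l1 := l1) (l2 := z :: l2) hc, ?_⟩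
  have : List.Chain' r ((l1 ++ [x]) ++ y :: z :: l2) := by simpa using hc
  exact chain'_pair this

lemma chain'_pair' {α : Type} {r : α → α → Prop} {l m1 m2 : List α} {x y : α}
    (hc : List.Chain' r l) (hm : l = m1 ++ [x, y] ++ m2) : r x y := by
  refine chain'_pair (l1 := m1) (l2 := m2) ?_
  rw [show m1 ++ x :: y :: m2 = m1 ++ [x, y] ++ m2 by simp, ← hm]
  exact hc

lemma chain'_middle' {α : Type} {r : α → α → Prop} {l m1 m2 : List α} {x y z : α}
    (hc : List.Chain' r l) (hm : l = m1 ++ [x, y, z] ++ m2) : r x y ∧ r y z := by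
  refine chain'_middle (l1 := m1) (l2 := m2) ?_
  rw [show m1 ++ x :: y :: z :: m2 = m1 ++ [x, y, z] ++ m2 by simp, ← hm]
  exact hc

lemma concat_two {α : Type} {q l1 : List α} {x y c : α} (h : q ++ [c] = l1 ++ [x, y]) :
    y = c ∧ l1 ++ [x] = q := by
  have h2 : (l1 ++ [x]) ++ [y] = q ++ [c] := by rw [List.append_assoc]; exact h.symm
  have h3 := List.append_inj' h2 rfl
  exact ⟨by simpa using h3.2, h3.1⟩

lemma concat_last {α : Type} {q l1 : List α} {x : α} (h : l1 ++ [x] = q) {y : α}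
    (hy : q.getLast? = some y) : x = y := by
  subst h; rw [List.getLast?_concat] at hy; exact Option.some_inj.mp hy

/-- every element of a chain reaches the last element -/
lemma chain_suffix_reach : ∀ (l : List V) (w : V), List.Chain G' w l →
    ∀ x ∈ w :: l, Relation.ReflTransGen G' x ((w :: l).getLast (by simp))
  | [], w, _, x, hx => by
      simp at hx; subst hx; exact Relation.ReflTransGen.refl
  | d :: l, w, hc, x, hx => by
      rcases List.chain_cons.mp hc with ⟨hwd, hc'⟩
      have hlast : ((w :: d :: l).getLast (by simp)) = ((d :: l).getLast (by simp)) := by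
        simp [List.getLast_cons]
      rw [hlast]
      rcases List.mem_cons.mp hx with rfl | hx'
      · exact Relation.ReflTransGen.head hwd (chain_suffix_reach l d hc' d (by simp))
      · exact chain_suffix_reach l d hc' x hx'

lemma transGen_of_chain_concat : ∀ (l : List V) (w t0 : V),
    List.Chain G' w (l ++ [t0]) → Relation.TransGen G' w t0
  | [], w, t0, hc => by
      simp only [List.nil_append, List.chain_cons] at hc
      exact Relation.TransGen.single (List.isChain_pair.mp hc)
  | d :: l, w, t0, hc => by
      rcases List.chain_cons.mp hc with ⟨hwd, hc'⟩
      exact Relation.TransGen.head hwd (transGen_of_chain_concat l d t0 hc')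

lemma chain_heads : ∀ (l : List V) (w : V), List.Chain G' w l → ∀ x ∈ l, ∃ u, G' u x
  | [], w, _, x, hx => by simp at hx
  | d :: l, w, hc, x, hx => by
      rcases List.chain_cons.mp hc with ⟨hwd, hc'⟩
      rcases List.mem_cons.mp hx with rfl | hx'
      · exact ⟨w, hwd⟩
      · exact chain_heads l d hc' x hx'

/-- first-hit refinement of a chain into a target set -/
lemma firstHit (T : Set V) : ∀ (ds : List V) (w : V), List.Chain G' w ds →
    ((w :: ds).getLast (by simp)) ∈ T →
    w ∈ T ∨ ∃ ds' t0, t0 ∈ T ∧ List.Chain G' w (ds' ++ [t0]) ∧ ∀ x ∈ ds', x ∉ T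
  | [], w, _, hT => by simpa using Or.inl (by simpa using hT)
  | d :: ds, w, hc, hT => by
      by_cases hw : w ∈ T
      · exact Or.inl hw
      rcases List.chain_cons.mp hc with ⟨hwd, hc'⟩
      by_cases hd : d ∈ T
      · exact Or.inr ⟨[], d, hd, (List.isChain_pair.mpr hwd : List.IsChain G' [w, d]), by simp⟩
      · have hT' : ((d :: ds).getLast (by simp)) ∈ T := by
          have : ((w :: d :: ds).getLast (by simp)) = ((d :: ds).getLast (by simp)) := by
            simp [List.getLast_cons]
          rwa [this] at hT
        rcases firstHit T ds d hc' hT' with h | ⟨ds', t0, h1, h2, h3⟩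
        · exact absurd h hd
        · refine Or.inr ⟨d :: ds', t0, h1, List.chain_cons.mpr ⟨hwd, h2⟩, ?_⟩
          intro x hx
          rcases List.mem_cons.mp hx with rfl | hx'
          · exact hd
          · exact h3 x hx'

/-- the directed-run lemma -/
lemma DRun (hacyc : ∀ v, ¬ Relation.TransGen G' v v) :
    ∀ (l : List V) (v w : V), G' v w →
    List.Chain' (Esym G') (v :: w :: l) →
    (∀ t ∈ trip (v :: w :: l), GoodT G' W' t) →
    (∃ l' x y, v :: w :: l = l' ++ [x, y] ∧ G' y x) →
    DescBad G' W' v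
  | [], v, w, hvw, _, _, hback => by
      obtain ⟨l', x, y, heq, hyx⟩ := hback
      have hl' : l' = [] := by
        rcases l' with _ | ⟨a, l''⟩
        · rfl
        · exfalso
          have := congrArg List.length heq
          simp at this
      subst hl'
      simp only [List.nil_append, List.cons.injEq, and_true] at heq
      obtain ⟨rfl, rfl⟩ := heq
      exact absurd hyx (noback G' hacyc hvw)
  | c :: l, v, w, hvw, hch, hgood, hback => by
      have hwc : Esym G' w c := chain'_pair (l1 := [v]) (by simpa using hch)
      rcases hwc with hwc | hcw
      · -- forward again: recurse
        have hback' : ∃ l' x y, w :: c :: l = l' ++ [x, y] ∧ G' y x := by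
          obtain ⟨l', x, y, heq, hyx⟩ := hback
          rcases l' with _ | ⟨a, l''⟩
          · exfalso
            simp only [List.nil_append, List.cons.injEq] at heq
            exact absurd heq.2.2 (by simp)
          · simp only [List.cons_append, List.cons.injEq] at heq
            exact ⟨l'', x, y, heq.2, hyx⟩
        have hdw : DescBad G' W' w :=
          DRun hacyc l w c hwc (hch.right_of_append (l₁ := [v])) (fun t ht => hgood t (by
            rw [trip_cons3]; exact List.mem_cons_of_mem _ ht)) hback'
        exact descBad_lift G' W' hvw hdw
      · -- collider at w
        have hcol : IsCol G' (v, w, c) := ⟨hvw, hcw⟩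
        exact descBad_lift G' W' hvw ((hgood (v, w, c) (by simp)).2 hcol)

end Comb

section Walks

variable {V : Type} (G' : V → V → Prop) (SY SZ SWt SXt : Set V)

/-- ancestors(-or-self) of `SY ∪ SZ ∪ SWt` -/
def AncT : Set V := {v | ∃ t ∈ SY ∪ SZ ∪ SWt, Relation.ReflTransGen G' v t}

lemma getLast?_append_right' {α : Type} (xs : List α) (y : α) (ys : List α) :
    (xs ++ y :: ys).getLast? = (y :: ys).getLast? := by
  rw [List.getLast?_append]
  rw [List.getLast?_eq_getLast (l := y :: ys) (by simp)]
  rfl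

lemma head?_append_cons {α : Type} (xs : List α) (a : α) (ys zs : List α) :
    (xs ++ a :: ys).head? = (xs ++ a :: zs).head? := by
  rw [List.head?_append, List.head?_append]; rfl

lemma not_nodup_decomp {α : Type} : ∀ (p : List α), ¬ p.Nodup →
    ∃ v p1 p2 p3, p = p1 ++ v :: p2 ++ v :: p3
  | [], h => absurd List.nodup_nil h
  | x :: xs, h => by
      by_cases hx : x ∈ xs
      · obtain ⟨s, t, hst⟩ := List.append_of_mem hx
        exact ⟨x, [], s, t, by simp [hst]⟩
      · have hxs : ¬ xs.Nodup := fun hn => h (List.nodup_cons.mpr ⟨hx, hn⟩)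
        obtain ⟨v, p1, p2, p3, hp⟩ := not_nodup_decomp xs hxs
        exact ⟨v, x :: p1, p2, p3, by simp [hp]⟩

lemma NAW_step
    (hacyc : ∀ v, ¬ Relation.TransGen G' v v)
    (hhead : ∀ a b, G' a b → b ∉ SXt)
    (hYW : ∀ y ∈ SY, y ∉ SWt ∪ SXt) (hZW : ∀ z ∈ SZ, z ∉ SWt ∪ SXt)
    (hYZ : ∀ y ∈ SY, y ∉ SZ)
    (hsep : DSep G' SY SZ (SWt ∪ SXt))
    (p : List V)
    (IH : ∀ q : List V,
        (nbadW G' (SWt ∪ SXt) q < nbadW G' (SWt ∪ SXt) p ∨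
          (nbadW G' (SWt ∪ SXt) q ≤ nbadW G' (SWt ∪ SXt) p ∧ q.length < p.length)) →
        List.Chain' (Esym G') q → (∀ t ∈ trip q, InvT G' (SWt ∪ SXt) t) →
        (∀ v ∈ q, v ∈ AncT G' SY SZ SWt) →
        (∃ y ∈ SY, q.head? = some y) → (∃ z ∈ SZ, q.getLast? = some z) → False)
    (hc : List.Chain' (Esym G') p) (hI : ∀ t ∈ trip p, InvT G' (SWt ∪ SXt) t)
    (hA : ∀ v ∈ p, v ∈ AncT G' SY SZ SWt)
    (hy : ∃ y ∈ SY, p.head? = some y) (hz : ∃ z ∈ SZ, p.getLast? = some z) : False := by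
  classical
  set W' : Set V := SWt ∪ SXt with hW'def
  by_cases hbad : ∃ t ∈ trip p, BadT G' W' t
  · -- ===== there is a bad collider =====
    obtain ⟨⟨a, w, c⟩, htmem, htbad⟩ := hbad
    have hGaw : G' a w := htbad.1.1
    have hGcw : G' c w := htbad.1.2
    have hnd : ¬ DescBad G' W' w := htbad.2
    obtain ⟨p1, p2, hp⟩ := trip_mem_structure p _ htmem
    simp only at hp
    have hpeq : p = p1 ++ a :: w :: c :: p2 := by simpa using hp
    have hwp : w ∈ p := by rw [hpeq]; simp
    have hwW : w ∉ W' := fun h => hnd ⟨w, Or.inl rfl, h⟩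
    have htr : trip p = trip (p1 ++ [a, w]) ++ ((a, w, c) :: trip (w :: c :: p2)) := by
      rw [hpeq, trip_append_cons p1 a w (c :: p2)]
      rfl
    have h1 : nbadW G' W' p =
        nbadW G' W' (p1 ++ [a, w]) + 1 + nbadW G' W' (w :: c :: p2) := by
      unfold nbadW
      rw [htr, List.countP_append]
      have e : List.countP (fun t => decide (BadT G' W' t)) ((a, w, c) :: trip (w :: c :: p2))
          = List.countP (fun t => decide (BadT G' W' t)) (trip (w :: c :: p2)) + 1 :=
        List.countP_cons_of_pos (decide_eq_true htbad)
      rw [e]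
      omega
    by_cases hwSY : w ∈ SY
    · -- restart from w
      have hpe2 : p = (p1 ++ [a]) ++ (w :: c :: p2) := by simp [hpeq]
      refine IH (w :: c :: p2) (Or.inl (by omega)) ?_ ?_ ?_ ?_ ?_
      · rw [hpe2] at hc; exact hc.right_of_append
      · intro t ht
        exact hI t (by rw [hpe2]; exact trip_mem_append_right _ ht)
      · intro x hx
        exact hA x (by rw [hpe2]; exact List.mem_append_right _ hx)
      · exact ⟨w, hwSY, rfl⟩
      · obtain ⟨z, hzZ, hzl⟩ := hz
        refine ⟨z, hzZ, ?_⟩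
        rw [hpe2, getLast?_append_right'] at hzl
        exact hzl
    · by_cases hwSZ : w ∈ SZ
      · -- truncate at w
        have hpe3 : p = (p1 ++ [a, w]) ++ (c :: p2) := by simp [hpeq]
        refine IH (p1 ++ [a, w]) (Or.inl (by omega)) ?_ ?_ ?_ ?_ ?_
        · rw [hpe3] at hc; exact (List.isChain_append.mp hc).1
        · intro t ht
          exact hI t (by rw [hpe3]; exact trip_mem_append_left _ _ _ ht)
        · intro x hx
          exact hA x (by rw [hpe3]; exact List.mem_append_left _ hx)
        · obtain ⟨y, hyY, hyh⟩ := hy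
          refine ⟨y, hyY, ?_⟩
          have : (p1 ++ [a, w]).head? = (p1 ++ a :: w :: c :: p2).head? :=
            head?_append_cons p1 a [w] (w :: c :: p2)
          rw [this, ← hpeq]
          exact hyh
        · exact ⟨w, hwSZ, by rw [show p1 ++ [a, w] = (p1 ++ [a]) ++ [w] by simp,
            List.getLast?_concat]⟩
      · -- descend from w
        obtain ⟨t', ht'T, hrt⟩ := hA w hwp
        obtain ⟨l, hchain, hlast⟩ := List.exists_isChain_cons_of_relationReflTransGen hrt
        have hlastT : ((w :: l).getLast (by simp)) ∈ SY ∪ SZ ∪ SWt := by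
          rw [hlast]; exact ht'T
        rcases firstHit G' (SY ∪ SZ ∪ SWt) l w hchain hlastT with hwT | hdesc
        · rcases hwT with (h | h) | h
          · exact hwSY h
          · exact hwSZ h
          · exact hwW (Or.inl h)
        obtain ⟨ds', t0, ht0, hchain2, hds'⟩ := hdesc
        -- D := w :: ds' ++ [t0]
        have hDchain : List.Chain' G' (w :: (ds' ++ [t0])) := hchain2
        have hDlast : (w :: (ds' ++ [t0])).getLast? = some t0 := by
          rw [show w :: (ds' ++ [t0]) = (w :: ds') ++ [t0] by simp, List.getLast?_concat]
        have hallD_An : ∀ x ∈ w :: (ds' ++ [t0]), x ∈ AncT G' SY SZ SWt := by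
          intro x hx
          have hreach := chain_suffix_reach G' (ds' ++ [t0]) w hchain2 x hx
          have hgl : ((w :: (ds' ++ [t0])).getLast (by simp)) = t0 := by
            have := List.getLast?_eq_getLast (l := w :: (ds' ++ [t0])) (by simp)
            rw [hDlast] at this
            exact (Option.some_inj.mp this.symm)
          rw [hgl] at hreach
          exact ⟨t0, ht0, hreach⟩
        have hds'W : ∀ x ∈ ds', x ∉ W' := by
          intro x hx hxW
          rcases hxW with hxW | hxW
          · exact hds' x hx (Or.inr hxW)
          · obtain ⟨u, hu⟩ := chain_heads G' (ds' ++ [t0]) w hchain2 x (by simp [hx])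
            exact hhead u x hu hxW
        rcases ht0 with (ht0Y | ht0Z) | ht0W
        · -- t0 ∈ SY : new walk  (w::ds'++[t0]).reverse ++ (c :: p2)
          have hD_notW : ∀ x ∈ w :: (ds' ++ [t0]), x ∉ W' := by
            intro x hx
            rcases List.mem_cons.mp hx with rfl | hx'
            · exact hwW
            rcases List.mem_append.mp hx' with hx'' | hx''
            · exact hds'W x hx''
            · rw [List.mem_singleton.mp hx'']
              exact hYW t0 ht0Y
          -- facts about triples of D.reverse ++ [c]
          have hrevgood : ∀ t : V × V × V, t ∈ trip ((w :: (ds' ++ [t0])).reverse ++ [c]) →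
              InvT G' W' t ∧ ¬ BadT G' W' t := by
            intro t ht
            have hflip : List.Chain' (flip G') ((w :: (ds' ++ [t0])).reverse) := by
              apply List.isChain_reverse.mpr
              exact hDchain
            rcases trip_concat _ c t ht with hin | ⟨l1, hl1, hc2⟩
            · obtain ⟨m1, m2, hm⟩ := trip_mem_structure _ t hin
              have hmid := chain'_middle' (r := flip G') hflip hm
              have hyx : G' t.2.1 t.1 := hmid.1
              have hncol : ¬ IsCol G' t := fun hcol => noback G' hacyc hyx hcol.1
              have hmem : t.2.1 ∈ w :: (ds' ++ [t0]) := by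
                rw [← List.mem_reverse]
                rw [hm]; simp
              exact ⟨fun _ => hD_notW _ hmem, fun hb => hncol hb.1⟩
            · -- boundary triple (x, w, c)
              have ht21 : t.2.1 = w := by
                have e1 : (l1 ++ [t.1, t.2.1]).getLast? = some t.2.1 := by
                  rw [show l1 ++ [t.1, t.2.1] = (l1 ++ [t.1]) ++ [t.2.1] by simp,
                    List.getLast?_concat]
                rw [← hl1, List.getLast?_reverse] at e1
                simp at e1
                exact e1.symm
              have hwt1 : G' w t.1 := by
                have h5 : flip G' t.1 t.2.1 := chain'_pair' (r := flip G') (m1 := l1) (m2 := []) hflip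
                  (by rw [hl1]; simp)
                have h6 : G' t.2.1 t.1 := h5
                rwa [ht21] at h6
              have hncol : ¬ IsCol G' t := fun hcol => by
                have h7 : G' t.1 t.2.1 := hcol.1
                rw [ht21] at h7
                exact noback G' hacyc hwt1 h7
              exact ⟨fun _ => by rw [ht21]; exact hwW, fun hb => hncol hb.1⟩
          -- assemble new walk
          set q : List V := (w :: (ds' ++ [t0])).reverse ++ (c :: p2) with hqdef
          have hqchain : List.Chain' (Esym G') q := by
            rw [hqdef]
            apply List.isChain_append.mpr
            refine ⟨?_, ?_, ?_⟩
            · apply List.isChain_reverse.mpr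
              exact hDchain.imp (fun {a b} h => Or.inr h)
            · have : p = (p1 ++ [a, w]) ++ (c :: p2) := by simp [hpeq]
              rw [this] at hc
              exact hc.right_of_append
            · intro x hx y hy
              rw [List.getLast?_reverse] at hx
              simp only [List.head?_cons, Option.mem_def, Option.some_inj] at hx hy
              rw [← hx, ← hy]
              exact Or.inr hGcw
          have hqInv : ∀ t ∈ trip q, InvT G' W' t := by
            intro t ht
            rw [hqdef] at ht
            rcases p2 with _ | ⟨h2, p2'⟩
            · exact (hrevgood t ht).1
            · rw [trip_append_cons _ c h2 p2'] at ht
              rcases List.mem_append.mp ht with ht' | ht'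
              · -- in rev-part (++ [c, h2])
                rcases trip_concat _ h2 t (by
                    rw [show (w :: (ds' ++ [t0])).reverse ++ [c, h2]
                        = ((w :: (ds' ++ [t0])).reverse ++ [c]) ++ [h2] by simp] at ht'
                    exact ht') with ht'' | ⟨l1, hl1, hc2⟩
                · exact (hrevgood t ht'').1
                · -- t = (w, c, h2)
                  obtain ⟨ht21, hrest⟩ := concat_two hl1
                  have ht1 : t.1 = w :=
                    concat_last hrest (by rw [List.getLast?_reverse]; rfl)
                  have hncol : ¬ IsCol G' t := fun hcol => by
                    have h7 : G' t.1 t.2.1 := hcol.1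
                    rw [ht21, ht1] at h7
                    exact noback G' hacyc hGcw h7
                  intro _
                  rw [ht21]
                  intro hcW
                  -- c ∈ W' : use original triple (w,c,h2) ∈ trip p
                  have htp : (w, c, h2) ∈ trip p := by
                    rw [show p = (p1 ++ [a]) ++ (w :: c :: h2 :: p2') by simp [hpeq]]
                    exact trip_mem_append_right _ (by simp)
                  have := hI _ htp (fun hcol => noback G' hacyc hGcw hcol.1)
                  exact this hcW
              · -- suffix c :: h2 :: p2'  triples of p
                have : t ∈ trip p := by
                  rw [show p = (p1 ++ [a, w]) ++ (c :: h2 :: p2') by simp [hpeq]]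
                  exact trip_mem_append_right _ ht'
                exact hI t this
          have hqbad : nbadW G' W' q ≤ nbadW G' W' (w :: c :: p2) := by
            rw [hqdef]
            unfold nbadW
            rcases p2 with _ | ⟨h2, p2'⟩
            · have : ∀ t ∈ trip ((w :: (ds' ++ [t0])).reverse ++ [c]),
                  ¬ (decide (BadT G' W' t) = true) := fun t ht hb =>
                (hrevgood t ht).2 (of_decide_eq_true hb)
              rw [List.countP_eq_zero.mpr this]
              omega
            · rw [trip_append_cons _ c h2 p2', List.countP_append]
              have hz1 : (trip ((w :: (ds' ++ [t0])).reverse ++ [c, h2])).countP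
                  (fun t => decide (BadT G' W' t)) = 0 := by
                apply List.countP_eq_zero.mpr
                intro t ht hb
                have hb' := of_decide_eq_true hb
                rcases trip_concat _ h2 t (by
                    rw [show (w :: (ds' ++ [t0])).reverse ++ [c, h2]
                        = ((w :: (ds' ++ [t0])).reverse ++ [c]) ++ [h2] by simp] at ht
                    exact ht) with ht'' | ⟨l1, hl1, hc2⟩
                · exact (hrevgood t ht'').2 hb'
                · obtain ⟨ht21, hrest⟩ := concat_two hl1
                  have ht1 : t.1 = w :=
                    concat_last hrest (by rw [List.getLast?_reverse]; rfl)
                  have h7 : G' t.1 t.2.1 := hb'.1.1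
                  rw [ht21, ht1] at h7
                  exact noback G' hacyc hGcw h7
              rw [hz1]
              have : trip (w :: c :: h2 :: p2') =
                  (w, c, h2) :: trip (c :: h2 :: p2') := rfl
              rw [this, List.countP_cons]
              omega
          refine IH q (Or.inl (by omega)) hqchain hqInv ?_ ?_ ?_
          · intro x hx
            rw [hqdef] at hx
            rcases List.mem_append.mp hx with hx' | hx'
            · exact hallD_An x (List.mem_reverse.mp hx')
            · refine hA x ?_
              rw [hpeq]
              simp only [List.mem_append, List.mem_cons] at hx' ⊢
              tauto
          · refine ⟨t0, ht0Y, ?_⟩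
            rw [hqdef, List.head?_append, List.head?_reverse, hDlast]
            rfl
          · obtain ⟨z, hzZ, hzl⟩ := hz
            refine ⟨z, hzZ, ?_⟩
            rw [hqdef, getLast?_append_right']
            rw [show p = (p1 ++ [a, w]) ++ (c :: p2) by simp [hpeq],
              getLast?_append_right'] at hzl
            exact hzl
        · -- t0 ∈ SZ : new walk  (p1 ++ [a]) ++ (w :: ds' ++ [t0])
          have hD_notW : ∀ x ∈ w :: (ds' ++ [t0]), x ∉ W' := by
            intro x hx
            rcases List.mem_cons.mp hx with rfl | hx'
            · exact hwW
            rcases List.mem_append.mp hx' with hx'' | hx''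
            · exact hds'W x hx''
            · rw [List.mem_singleton.mp hx'']
              exact hZW t0 ht0Z
          set q : List V := p1 ++ a :: w :: (ds' ++ [t0]) with hqdef
          have hq2 : q = (p1 ++ [a]) ++ (w :: (ds' ++ [t0])) := by simp [hqdef]
          have hqchain : List.Chain' (Esym G') q := by
            rw [hq2]
            apply List.isChain_append.mpr
            refine ⟨?_, hDchain.imp (fun {a b} h => Or.inl h), ?_⟩
            · have : p = (p1 ++ [a]) ++ (w :: c :: p2) := by simp [hpeq]
              rw [this] at hc
              exact (List.isChain_append.mp hc).1
            · intro x hx y hy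
              rw [List.getLast?_concat] at hx
              simp only [List.head?_cons, Option.mem_def, Option.some_inj] at hx hy
              rw [← hx, ← hy]
              exact Or.inl hGaw
          have hconsgood : ∀ t : V × V × V, t ∈ trip (a :: w :: (ds' ++ [t0])) →
              InvT G' W' t ∧ ¬ BadT G' W' t := by
            intro t ht
            obtain ⟨m1, m2, hm⟩ := trip_cons_struct a _ t ht
            have hmid : G' t.2.1 t.2.2 := chain'_pair' (r := G') hDchain hm
            have hncol : ¬ IsCol G' t := fun hcol => noback G' hacyc hmid hcol.2
            have hmem : t.2.1 ∈ w :: (ds' ++ [t0]) := by rw [hm]; simp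
            exact ⟨fun _ => hD_notW _ hmem, fun hb => hncol hb.1⟩
          have hqInv : ∀ t ∈ trip q, InvT G' W' t := by
            intro t ht
            rw [hqdef, trip_append_cons p1 a w (ds' ++ [t0])] at ht
            rcases List.mem_append.mp ht with ht' | ht'
            · refine hI t ?_
              rw [show p = (p1 ++ [a, w]) ++ (c :: p2) by simp [hpeq]]
              exact trip_mem_append_left _ _ _ ht'
            · exact (hconsgood t ht').1
          have hqbad : nbadW G' W' q = nbadW G' W' (p1 ++ [a, w]) := by
            unfold nbadW
            rw [hqdef, trip_append_cons p1 a w (ds' ++ [t0]), List.countP_append]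
            have : (trip (a :: w :: (ds' ++ [t0]))).countP
                (fun t => decide (BadT G' W' t)) = 0 :=
              List.countP_eq_zero.mpr (fun t ht hb =>
                (hconsgood t ht).2 (of_decide_eq_true hb))
            rw [this]
            omega
          refine IH q (Or.inl (by omega)) hqchain hqInv ?_ ?_ ?_
          · intro x hx
            rw [hq2] at hx
            rcases List.mem_append.mp hx with hx' | hx'
            · refine hA x ?_
              rw [show p = (p1 ++ [a]) ++ (w :: c :: p2) by simp [hpeq]]
              exact List.mem_append_left _ hx'
            · exact hallD_An x hx'
          · obtain ⟨y, hyY, hyh⟩ := hy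
            refine ⟨y, hyY, ?_⟩
            rw [hqdef, head?_append_cons p1 a (w :: (ds' ++ [t0])) (w :: c :: p2), ← hpeq]
            exact hyh
          · refine ⟨t0, ht0Z, ?_⟩
            rw [hq2, getLast?_append_right', hDlast]
        · -- t0 ∈ SWt : contradiction with no descendant in W'
          exact hnd ⟨t0, Or.inr (transGen_of_chain_concat G' ds' w t0 hchain2),
            Or.inl ht0W⟩
  · -- ===== all triples good =====
    have hgood : ∀ t ∈ trip p, GoodT G' W' t := by
      intro t ht
      refine ⟨hI t ht, fun hcol => ?_⟩
      by_contra hnd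
      exact hbad ⟨t, ht, hcol, hnd⟩
    have hnb0 : nbadW G' W' p = 0 :=
      List.countP_eq_zero.mpr (fun t ht hb => hbad ⟨t, ht, of_decide_eq_true hb⟩)
    by_cases hnd : p.Nodup
    · -- apply d-separation
      obtain ⟨y, hySY, hhy⟩ := hy
      obtain ⟨z, hzSZ, hhz⟩ := hz
      have hblocked := hsep p ⟨hnd, hc⟩ ⟨y, hySY, hhy⟩ ⟨z, hzSZ, hhz⟩
      obtain ⟨i, a, w, c, h1, h2, h3, hcase⟩ := hblocked
      have htm : (a, w, c) ∈ trip p := mem_trip_of_getElem p i a w c h1 h2 h3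
      have hg := hgood _ htm
      rcases hcase with ⟨hpat, hwW'⟩ | ⟨⟨haw, hcw⟩, hnod⟩
      · rcases hpat with ⟨h4, h5⟩ | ⟨h4, h5⟩ | ⟨h4, h5⟩
        · exact hg.1 (fun hcol => noback G' hacyc h5 hcol.2) hwW'
        · exact hg.1 (fun hcol => noback G' hacyc h5 hcol.1) hwW'
        · exact hg.1 (fun hcol => noback G' hacyc h4 hcol.1) hwW'
      · obtain ⟨r, hr, hrW⟩ := hg.2 ⟨haw, hcw⟩
        exact hnod r hr hrW
    · -- splice out a repeated vertex
      obtain ⟨v, p1, p2, p3, hp⟩ := not_nodup_decomp p hnd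
      by_cases hp1 : p1 = []
      · subst hp1
        simp only [List.nil_append] at hp
        have hvy : v ∈ SY := by
          obtain ⟨y, hyY, hyh⟩ := hy
          rw [hp] at hyh
          simp only [List.cons_append, List.head?_cons, Option.some_inj] at hyh
          rw [hyh]; exact hyY
        rcases p3 with _ | ⟨h3, p3'⟩
        · -- p3 = [] : v also last, contradiction with disjointness
          obtain ⟨z, hzZ, hzl⟩ := hz
          rw [hp, show v :: p2 ++ [v] = (v :: p2) ++ [v] by simp,
            List.getLast?_concat] at hzl
          refine hYZ v hvy ?_
          rw [Option.some_inj.mp hzl]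
          exact hzZ
        · refine IH (v :: h3 :: p3') (Or.inr ⟨?_, by rw [hp]; simp only [List.length_append, List.length_cons, List.nil_append, List.cons_append, List.length_nil]; omega⟩) ?_ ?_ ?_ ?_ ?_
          · have : nbadW G' W' (v :: h3 :: p3') = 0 :=
              List.countP_eq_zero.mpr (fun t ht hb => hbad ⟨t, by
                rw [hp, show v :: p2 ++ v :: h3 :: p3' = (v :: p2) ++ (v :: h3 :: p3') by simp]
                exact trip_mem_append_right _ ht, of_decide_eq_true hb⟩)
            omega
          · rw [hp, show v :: p2 ++ v :: h3 :: p3' = (v :: p2) ++ (v :: h3 :: p3') by simp]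
              at hc
            exact hc.right_of_append
          · intro t ht
            refine hI t ?_
            rw [hp, show v :: p2 ++ v :: h3 :: p3' = (v :: p2) ++ (v :: h3 :: p3') by simp]
            exact trip_mem_append_right _ ht
          · intro x hx
            refine hA x ?_
            rw [hp]
            simp only [List.mem_cons, List.mem_append] at hx ⊢
            tauto
          · exact ⟨v, hvy, rfl⟩
          · obtain ⟨z, hzZ, hzl⟩ := hz
            refine ⟨z, hzZ, ?_⟩
            rw [hp, show v :: p2 ++ v :: h3 :: p3' = (v :: p2) ++ (v :: h3 :: p3') by simp,
              getLast?_append_right'] at hzl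
            exact hzl
      · rcases p3 with _ | ⟨h3, p3'⟩
        · -- p3 = [] : v is last, v ∈ SZ, truncate
          have hvz : v ∈ SZ := by
            obtain ⟨z, hzZ, hzl⟩ := hz
            rw [hp, show p1 ++ v :: p2 ++ [v] = (p1 ++ v :: p2) ++ [v] by simp,
              List.getLast?_concat] at hzl
            rw [Option.some_inj.mp hzl]
            exact hzZ
          refine IH (p1 ++ [v]) (Or.inr ⟨?_, by rw [hp]; simp only [List.length_append, List.length_cons, List.nil_append, List.cons_append, List.length_nil]; omega⟩) ?_ ?_ ?_ ?_ ?_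
          · have : nbadW G' W' (p1 ++ [v]) = 0 :=
              List.countP_eq_zero.mpr (fun t ht hb => hbad ⟨t, by
                rw [hp, show p1 ++ v :: p2 ++ [v] = (p1 ++ [v]) ++ (p2 ++ [v]) by simp]
                exact trip_mem_append_left _ _ _ ht, of_decide_eq_true hb⟩)
            omega
          · rw [hp, show p1 ++ v :: p2 ++ [v] = (p1 ++ [v]) ++ (p2 ++ [v]) by simp] at hc
            exact (List.isChain_append.mp hc).1
          · intro t ht
            refine hI t ?_
            rw [hp, show p1 ++ v :: p2 ++ [v] = (p1 ++ [v]) ++ (p2 ++ [v]) by simp]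
            exact trip_mem_append_left _ _ _ ht
          · intro x hx
            refine hA x ?_
            rw [hp]
            simp only [List.mem_cons, List.mem_append] at hx ⊢
            tauto
          · obtain ⟨y, hyY, hyh⟩ := hy
            refine ⟨y, hyY, ?_⟩
            rw [hp] at hyh
            rw [show p1 ++ v :: p2 ++ [v] = p1 ++ v :: (p2 ++ [v]) by simp] at hyh
            rw [show p1 ++ [v] = p1 ++ v :: ([] : List V) by simp,
              head?_append_cons p1 v ([] : List V) (p2 ++ [v])]
            exact hyh
          · exact ⟨v, hvz, by rw [List.getLast?_concat]⟩
        · -- general internal splice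
          obtain ⟨p1'', l1, hp1e⟩ : ∃ p1'' l1, p1 = p1'' ++ [l1] := by
            rcases List.eq_nil_or_concat p1 with h | ⟨L, b, h⟩
            · exact absurd h hp1
            · exact ⟨L, b, by simpa using h⟩
          rcases p2 with _ | ⟨h2, p2'⟩
          · -- p2 = [] : self-edge, contradiction with acyclicity
            have : Esym G' v v := by
              refine chain'_pair (l1 := p1) (l2 := h3 :: p3') ?_
              rw [show p1 ++ v :: v :: h3 :: p3' = p1 ++ v :: [] ++ v :: (h3 :: p3')
                by simp, ← hp]
              exact hc
            rcases this with h | h <;> exact hacyc v (Relation.TransGen.single h)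
          obtain ⟨p2'', lp2, hp2e⟩ : ∃ p2'' lp2, h2 :: p2' = p2'' ++ [lp2] := by
            rcases List.eq_nil_or_concat (h2 :: p2') with h | ⟨L, b, h⟩
            · simp at h
            · exact ⟨L, b, by simpa using h⟩
          -- edges
          have hE1 : Esym G' l1 v := by
            refine chain'_pair (l1 := p1'') (l2 := (h2 :: p2') ++ v :: h3 :: p3') ?_
            rw [show p1'' ++ l1 :: v :: ((h2 :: p2') ++ v :: h3 :: p3')
                = (p1'' ++ [l1]) ++ v :: (h2 :: p2') ++ v :: h3 :: p3' by simp, ← hp1e, ← hp]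
            exact hc
          have hEvh2 : Esym G' v h2 := by
            refine chain'_pair (l1 := p1) (l2 := p2' ++ v :: h3 :: p3') ?_
            rw [show p1 ++ v :: h2 :: (p2' ++ v :: h3 :: p3')
                = p1 ++ v :: (h2 :: p2') ++ v :: h3 :: p3' by simp, ← hp]
            exact hc
          have hElp2 : Esym G' lp2 v ∧ Esym G' v h3 := by
            refine chain'_middle (l1 := p1 ++ v :: p2'') (l2 := p3') ?_
            rw [show (p1 ++ v :: p2'') ++ lp2 :: v :: h3 :: p3'
                = p1 ++ v :: (p2'' ++ [lp2]) ++ v :: h3 :: p3' by simp, ← hp2e, ← hp]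
            exact hc
          -- old triples
          have hT1 : (l1, v, h2) ∈ trip p := by
            rw [hp, hp1e, show (p1'' ++ [l1]) ++ v :: (h2 :: p2') ++ v :: h3 :: p3'
              = p1'' ++ (l1 :: v :: h2 :: (p2' ++ v :: h3 :: p3')) by simp]
            exact trip_mem_append_right _ (by simp)
          have hT2 : (lp2, v, h3) ∈ trip p := by
            rw [hp, show p1 ++ v :: (h2 :: p2') ++ v :: h3 :: p3'
              = (p1 ++ v :: p2'') ++ (lp2 :: v :: h3 :: p3') by
                rw [show (p1 ++ v :: p2'') ++ (lp2 :: v :: h3 :: p3')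
                  = p1 ++ v :: (p2'' ++ [lp2]) ++ v :: h3 :: p3' by simp, ← hp2e]]
            exact trip_mem_append_right _ (by simp)
          -- the new junction triple is good
          have hnew : InvT G' W' (l1, v, h3) ∧ ¬ BadT G' W' (l1, v, h3) := by
            constructor
            · intro hncol
              simp only [IsCol] at hncol
              push_neg at hncol
              rcases hE1 with h | h
              · -- G' l1 v ; then ¬ G' h3 v, so G' v h3
                have hgh3 : G' v h3 := by
                  rcases hElp2.2 with h' | h'
                  · exact h'
                  · exact absurd h' (hncol h)
                have : ¬ IsCol G' (lp2, v, h3) := fun hcol =>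
                  noback G' hacyc hgh3 hcol.2
                exact (hgood _ hT2).1 this
              · -- G' v l1
                have : ¬ IsCol G' (l1, v, h2) := fun hcol =>
                  noback G' hacyc h hcol.1
                exact (hgood _ hT1).1 this
            · rintro ⟨⟨hl1v, hh3v⟩, hnodesc⟩
              apply hnodesc
              by_cases hc1 : G' h2 v
              · exact (hgood _ hT1).2 ⟨hl1v, hc1⟩
              · have hvh2 : G' v h2 := by
                  rcases hEvh2 with h | h
                  · exact h
                  · exact absurd h hc1
                by_cases hc2 : G' lp2 v
                · exact (hgood _ hT2).2 ⟨hc2, hh3v⟩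
                · have hvlp2 : G' v lp2 := by
                    rcases hElp2.1 with h | h
                    · exact absurd h hc2
                    · exact h
                  -- directed run through the loop
                  refine DRun G' W' hacyc (p2' ++ [v]) v h2 hvh2 ?_ ?_ ?_
                  · have : List.Chain' (Esym G') ((v :: (h2 :: p2') ++ [v]) ++ (h3 :: p3')) := by
                      have e : (v :: (h2 :: p2') ++ [v]) ++ (h3 :: p3')
                          = v :: (h2 :: p2') ++ v :: h3 :: p3' := by simp
                      rw [e]
                      have hpp : p = p1 ++ ((v :: h2 :: p2') ++ v :: h3 :: p3') := by
                        rw [hp]; simp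
                      have := hc
                      rw [hpp] at this
                      exact this.right_of_append (l₁ := p1)
                    have := (List.isChain_append.mp this).1
                    exact this
                  · intro t ht
                    refine hgood t ?_
                    rw [hp]
                    have e : p1 ++ v :: (h2 :: p2') ++ v :: h3 :: p3'
                        = p1 ++ ((v :: h2 :: (p2' ++ [v])) ++ (h3 :: p3')) := by simp
                    rw [e]
                    refine trip_mem_append_right _ ?_
                    refine trip_mem_append_left _ _ _ ?_
                    simpa using ht
                  · refine ⟨v :: p2'', lp2, v, ?_, hvlp2⟩
                    rw [show v :: h2 :: (p2' ++ [v]) = v :: ((h2 :: p2') ++ [v]) by simp,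
                      hp2e]
                    simp
          -- new walk q
          set q : List V := p1 ++ v :: h3 :: p3' with hqdef
          have htrq : trip q = trip (p1'' ++ [l1, v]) ++ ((l1, v, h3) :: trip (v :: h3 :: p3')) := by
            rw [hqdef, hp1e, show (p1'' ++ [l1]) ++ v :: h3 :: p3'
              = p1'' ++ l1 :: v :: (h3 :: p3') by simp, trip_append_cons p1'' l1 v (h3 :: p3')]
            rfl
          have hfirstsub : ∀ t ∈ trip (p1'' ++ [l1, v]), t ∈ trip p := by
            intro t ht
            rw [hp, hp1e, show (p1'' ++ [l1]) ++ v :: (h2 :: p2') ++ v :: h3 :: p3'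
              = (p1'' ++ [l1, v]) ++ ((h2 :: p2') ++ v :: h3 :: p3') by simp]
            exact trip_mem_append_left _ _ _ ht
          have hlastsub : ∀ t ∈ trip (v :: h3 :: p3'), t ∈ trip p := by
            intro t ht
            rw [hp, show p1 ++ v :: (h2 :: p2') ++ v :: h3 :: p3'
              = (p1 ++ v :: (h2 :: p2')) ++ (v :: h3 :: p3') by simp]
            exact trip_mem_append_right _ ht
          refine IH q (Or.inr ⟨?_, by rw [hqdef, hp]; simp only [List.length_append, List.length_cons, List.nil_append, List.cons_append, List.length_nil]; omega⟩) ?_ ?_ ?_ ?_ ?_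
          · have : nbadW G' W' q = 0 := by
              unfold nbadW
              rw [htrq, List.countP_append, List.countP_cons]
              have e1 : (trip (p1'' ++ [l1, v])).countP (fun t => decide (BadT G' W' t)) = 0 :=
                List.countP_eq_zero.mpr (fun t ht hb =>
                  hbad ⟨t, hfirstsub t ht, of_decide_eq_true hb⟩)
              have e2 : (trip (v :: h3 :: p3')).countP (fun t => decide (BadT G' W' t)) = 0 :=
                List.countP_eq_zero.mpr (fun t ht hb =>
                  hbad ⟨t, hlastsub t ht, of_decide_eq_true hb⟩)
              have e3 : decide (BadT G' W' (l1, v, h3)) = false := by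
                simp only [decide_eq_false_iff_not]
                exact hnew.2
              rw [e1, e2, e3]
              rfl
            omega
          · rw [hqdef]
            apply List.isChain_append.mpr
            refine ⟨?_, ?_, ?_⟩
            · have := hc
              rw [hp, show p1 ++ v :: (h2 :: p2') ++ v :: h3 :: p3'
                = p1 ++ (v :: (h2 :: p2') ++ v :: h3 :: p3') by simp] at this
              exact (List.isChain_append.mp this).1
            · have := hc
              rw [hp, show p1 ++ v :: (h2 :: p2') ++ v :: h3 :: p3'
                = (p1 ++ v :: (h2 :: p2')) ++ (v :: h3 :: p3') by simp] at this
              exact this.right_of_append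
            · intro x hx y hy
              rw [hp1e, List.getLast?_concat] at hx
              simp only [List.head?_cons, Option.mem_def, Option.some_inj] at hx hy
              rw [← hx, ← hy]
              exact hE1
          · intro t ht
            rw [htrq] at ht
            rcases List.mem_append.mp ht with ht' | ht'
            · exact hI t (hfirstsub t ht')
            · rcases List.mem_cons.mp ht' with rfl | ht''
              · exact hnew.1
              · exact hI t (hlastsub t ht'')
          · intro x hx
            refine hA x ?_
            rw [hqdef] at hx
            rw [hp]
            simp only [List.mem_append, List.mem_cons] at hx ⊢
            tauto
          · obtain ⟨y, hyY, hyh⟩ := hy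
            refine ⟨y, hyY, ?_⟩
            have hp' : p = p1 ++ v :: ((h2 :: p2') ++ v :: h3 :: p3') := by rw [hp]; simp
            rw [hqdef, head?_append_cons p1 v (h3 :: p3') ((h2 :: p2') ++ v :: h3 :: p3'), ← hp']
            exact hyh
          · obtain ⟨z, hzZ, hzl⟩ := hz
            refine ⟨z, hzZ, ?_⟩
            rw [hp, show p1 ++ v :: (h2 :: p2') ++ v :: h3 :: p3'
              = (p1 ++ v :: (h2 :: p2')) ++ (v :: h3 :: p3') by simp,
              getLast?_append_right'] at hzl
            rw [hqdef, getLast?_append_right']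
            exact hzl

end Walks

section Walks2

variable {V : Type} (G' : V → V → Prop) (SY SZ SWt SXt : Set V)

lemma NAW
    (hacyc : ∀ v, ¬ Relation.TransGen G' v v)
    (hhead : ∀ a b, G' a b → b ∉ SXt)
    (hYW : ∀ y ∈ SY, y ∉ SWt ∪ SXt) (hZW : ∀ z ∈ SZ, z ∉ SWt ∪ SXt)
    (hYZ : ∀ y ∈ SY, y ∉ SZ)
    (hsep : DSep G' SY SZ (SWt ∪ SXt)) :
    ∀ (n m : ℕ) (p : List V), nbadW G' (SWt ∪ SXt) p ≤ n → p.length ≤ m →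
    List.Chain' (Esym G') p → (∀ t ∈ trip p, InvT G' (SWt ∪ SXt) t) →
    (∀ v ∈ p, v ∈ AncT G' SY SZ SWt) →
    (∃ y ∈ SY, p.head? = some y) → (∃ z ∈ SZ, p.getLast? = some z) → False := by
  intro n
  induction n with
  | zero =>
      intro m
      induction m with
      | zero =>
          intro p h1 h2 _ _ _ hy _
          obtain rfl : p = [] := List.length_eq_zero_iff.mp (Nat.le_zero.mp h2)
          obtain ⟨y, _, hy'⟩ := hy
          simp at hy'
      | succ m ihm =>
          intro p h1 h2 hc hI hA hy hz
          refine NAW_step G' SY SZ SWt SXt hacyc hhead hYW hZW hYZ hsep p ?_ hc hI hA hy hz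
          intro q hq hc' hI' hA' hy' hz'
          rcases hq with hlt | ⟨hle, hlen⟩
          · omega
          · exact ihm q (by omega) (by omega) hc' hI' hA' hy' hz'
  | succ n ihn =>
      intro m
      induction m with
      | zero =>
          intro p h1 h2 _ _ _ hy _
          obtain rfl : p = [] := List.length_eq_zero_iff.mp (Nat.le_zero.mp h2)
          obtain ⟨y, _, hy'⟩ := hy
          simp at hy'
      | succ m ihm =>
          intro p h1 h2 hc hI hA hy hz
          refine NAW_step G' SY SZ SWt SXt hacyc hhead hYW hZW hYZ hsep p ?_ hc hI hA hy hz
          intro q hq hc' hI' hA' hy' hz'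
          rcases hq with hlt | ⟨hle, hlen⟩
          · exact ihn q.length q (by omega) (le_refl _) hc' hI' hA' hy' hz'
          · exact ihm q (by omega) (by omega) hc' hI' hA' hy' hz'

variable (RA : Set V)

/-- adjacency in the "factor graph" -/
def FAdjR (u v : V) : Prop :=
  u ∈ AncT G' SY SZ SWt ∧ v ∈ AncT G' SY SZ SWt ∧
    ((u ∈ SY ∧ G' u v) ∨ (u ∈ RA ∧ G' u v) ∨ (v ∈ RA ∧ G' v u))

lemma reach_safe
    (hacyc : ∀ v, ¬ Relation.TransGen G' v v)
    (hhead : ∀ a b, G' a b → b ∉ SXt)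
    (hYW : ∀ y ∈ SY, y ∉ SWt ∪ SXt) (hZW : ∀ z ∈ SZ, z ∉ SWt ∪ SXt)
    (hYZ : ∀ y ∈ SY, y ∉ SZ)
    (hsep : DSep G' SY SZ (SWt ∪ SXt))
    (hRAW : ∀ r ∈ RA, r ∉ SWt ∪ SXt)
    {y v : V} (hy : y ∈ SY)
    (hr : Relation.ReflTransGen (FAdjR G' SY SZ SWt RA) y v) :
    v ∉ SZ ∧ ∀ z ∈ SZ, ¬ G' z v := by
  obtain ⟨l, hchain, hlast⟩ := List.exists_isChain_cons_of_relationReflTransGen hr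
  have hCF : List.Chain' (FAdjR G' SY SZ SWt RA) (y :: l) := hchain
  have himp : ∀ (a b : V), FAdjR G' SY SZ SWt RA a b → Esym G' a b := by
    rintro a b ⟨_, _, (⟨_, h⟩ | ⟨_, h⟩ | ⟨_, h⟩)⟩
    · exact Or.inl h
    · exact Or.inl h
    · exact Or.inr h
  have hcE : List.Chain' (Esym G') (y :: l) := hCF.imp (fun {a b} h => himp a b h)
  have hyAn : y ∈ AncT G' SY SZ SWt := ⟨y, by simp [hy], Relation.ReflTransGen.refl⟩
  have hmem : ∀ x ∈ y :: l, x ∈ AncT G' SY SZ SWt := by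
    intro x hx
    rcases List.mem_cons.mp hx with rfl | hx'
    · exact hyAn
    · obtain ⟨u, hu⟩ := chain_heads (FAdjR G' SY SZ SWt RA) l y hchain x hx'
      exact hu.2.1
  have hInv : ∀ t ∈ trip (y :: l), InvT G' (SWt ∪ SXt) t := by
    intro t ht
    obtain ⟨m1, m2, hm⟩ := trip_mem_structure _ t ht
    have hmid := chain'_middle' (r := FAdjR G' SY SZ SWt RA) hCF hm
    intro hncol
    have hncol' : ¬ (G' t.1 t.2.1 ∧ G' t.2.2 t.2.1) := hncol
    rcases hmid.1.2.2 with ⟨hu, hg⟩ | ⟨hu, hg⟩ | ⟨hu, hg⟩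
    · -- G' t.1 t.2.1 (tail in SY) : then look at second edge
      rcases hmid.2.2.2 with ⟨hu2, hg2⟩ | ⟨hu2, hg2⟩ | ⟨hu2, hg2⟩
      · exact hYW _ hu2
      · exact hRAW _ hu2
      · exact absurd ⟨hg, hg2⟩ hncol'
    · rcases hmid.2.2.2 with ⟨hu2, hg2⟩ | ⟨hu2, hg2⟩ | ⟨hu2, hg2⟩
      · exact hYW _ hu2
      · exact hRAW _ hu2
      · exact absurd ⟨hg, hg2⟩ hncol'
    · exact hRAW _ hu
  have hhead? : (y :: l).head? = some y := rfl
  have hlast? : (y :: l).getLast? = some v := by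
    rw [List.getLast?_eq_getLast (by simp), hlast]
  constructor
  · intro hvZ
    exact NAW G' SY SZ SWt SXt hacyc hhead hYW hZW hYZ hsep
      (nbadW G' (SWt ∪ SXt) (y :: l)) (y :: l).length (y :: l) (le_refl _) (le_refl _)
      hcE hInv hmem ⟨y, hy, hhead?⟩ ⟨v, hvZ, hlast?⟩
  · intro z hzZ hGzv
    -- extend the walk by z
    have hqchain : List.Chain' (Esym G') ((y :: l) ++ [z]) := by
      apply List.isChain_append.mpr
      refine ⟨hcE, by simp, ?_⟩
      intro x hx y' hy'
      rw [hlast?] at hx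
      simp only [Option.mem_def, Option.some_inj, List.head?_cons] at hx hy'
      rw [← hx, ← hy']
      exact Or.inr hGzv
    have hqInv : ∀ t ∈ trip ((y :: l) ++ [z]), InvT G' (SWt ∪ SXt) t := by
      intro t ht
      rcases trip_concat _ z t ht with ht' | ⟨l1, hl1, hc2⟩
      · exact hInv t ht'
      · -- boundary triple (sl, v, z)
        have ht21 : t.2.1 = v := by
          have e1 : (l1 ++ [t.1, t.2.1]).getLast? = some t.2.1 := by
            rw [show l1 ++ [t.1, t.2.1] = (l1 ++ [t.1]) ++ [t.2.1] by simp,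
              List.getLast?_concat]
          rw [← hl1, hlast?] at e1
          exact (Option.some_inj.mp e1).symm
        have hFsl : FAdjR G' SY SZ SWt RA t.1 t.2.1 :=
          chain'_pair' (m1 := l1) (m2 := []) hCF (by rw [hl1]; simp)
        intro hncol
        have hncol' : ¬ (G' t.1 t.2.1 ∧ G' t.2.2 t.2.1) := hncol
        have hGzv' : G' t.2.2 t.2.1 := by rw [ht21, hc2]; exact hGzv
        have hnsl : ¬ G' t.1 t.2.1 := fun h => hncol' ⟨h, hGzv'⟩
        rcases hFsl.2.2 with ⟨hu, hg⟩ | ⟨hu, hg⟩ | ⟨hu, hg⟩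
        · exact absurd hg hnsl
        · exact absurd hg hnsl
        · rw [ht21] at hu ⊢; exact hRAW _ hu
    have hqmem : ∀ x ∈ (y :: l) ++ [z], x ∈ AncT G' SY SZ SWt := by
      intro x hx
      rcases List.mem_append.mp hx with hx' | hx'
      · exact hmem x hx'
      · rw [List.mem_singleton.mp hx']
        exact ⟨z, by simp [hzZ], Relation.ReflTransGen.refl⟩
    exact NAW G' SY SZ SWt SXt hacyc hhead hYW hZW hYZ hsep
      (nbadW G' (SWt ∪ SXt) ((y :: l) ++ [z])) ((y :: l) ++ [z]).length ((y :: l) ++ [z])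
      (le_refl _) (le_refl _) hqchain hqInv hqmem
      ⟨y, hy, by simp⟩ ⟨z, hzZ, by rw [List.getLast?_concat]⟩

end Walks2

section Alg

set_option linter.unusedSectionVars false

variable {V : Type} [Fintype V] {val : V → ℕ}

lemma ovr_mem (T : Set (V × Bool)) (ω : CAsg V val) (t : ∀ p : ↥T, Fin (val p.1.1))
    {q : V × Bool} (h : q ∈ T) : ovr T ω t q = t ⟨q, h⟩ := dif_pos h

lemma ovr_not_mem (T : Set (V × Bool)) (ω : CAsg V val) (t : ∀ p : ↥T, Fin (val p.1.1))
    {q : V × Bool} (h : q ∉ T) : ovr T ω t q = ω q := dif_neg h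

lemma sum_ovr_union (L L1 L2 : Set (V × Bool)) (hL : L = L1 ∪ L2)
    (hd : ∀ q, q ∈ L1 → q ∉ L2) (H : CAsg V val → ℝ) (ω : CAsg V val) :
    ∑ t : (∀ q : ↥L, Fin (val q.1.1)), H (ovr L ω t)
      = ∑ t2 : (∀ q : ↥L2, Fin (val q.1.1)), ∑ t1 : (∀ q : ↥L1, Fin (val q.1.1)),
          H (ovr L1 (ovr L2 ω t2) t1) := by
  have hmem : ∀ q : V × Bool, q ∈ L ↔ q ∈ L1 ∨ q ∈ L2 := fun q => by
    rw [hL]; exact Set.mem_union q L1 L2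
  let e : (∀ q : ↥L, Fin (val q.1.1)) ≃
      ((∀ q : ↥L2, Fin (val q.1.1)) × (∀ q : ↥L1, Fin (val q.1.1))) :=
    { toFun := fun t => (fun q => t ⟨q.1, (hmem q.1).mpr (Or.inr q.2)⟩,
        fun q => t ⟨q.1, (hmem q.1).mpr (Or.inl q.2)⟩),
      invFun := fun s q =>
        if h : q.1 ∈ L1 then s.2 ⟨q.1, h⟩
        else s.1 ⟨q.1, ((hmem q.1).mp q.2).resolve_left h⟩,
      left_inv := by
        intro t; funext q
        dsimp only
        split_ifs with h <;> rfl
      right_inv := by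
        intro s
        refine Prod.ext ?_ ?_
        · funext q
          dsimp only
          rw [dif_neg (fun h => hd _ h q.2)]
        · funext q
          dsimp only
          rw [dif_pos q.2] }
  have h0 : ∑ t : (∀ q : ↥L, Fin (val q.1.1)), H (ovr L ω t)
      = ∑ s : ((∀ q : ↥L2, Fin (val q.1.1)) × (∀ q : ↥L1, Fin (val q.1.1))),
          H (ovr L ω (e.symm s)) :=
    Fintype.sum_equiv e _ _ (fun t => by rw [Equiv.symm_apply_apply])
  refine h0.trans ?_
  rw [Fintype.sum_prod_type]
  refine Finset.sum_congr rfl (fun t2 _ => Finset.sum_congr rfl (fun t1 _ => ?_))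
  congr 1
  funext q
  by_cases h1 : q ∈ L1
  · rw [ovr_mem _ _ _ ((hmem q).mpr (Or.inl h1)), ovr_mem _ _ _ h1]
    exact dif_pos h1
  · by_cases h2 : q ∈ L2
    · rw [ovr_mem _ _ _ ((hmem q).mpr (Or.inr h2)),
        ovr_not_mem _ _ _ h1, ovr_mem _ _ _ h2]
      exact dif_neg h1
    · rw [ovr_not_mem _ _ _ (fun hq => ((hmem q).mp hq).elim h1 h2),
        ovr_not_mem _ _ _ h1, ovr_not_mem _ _ _ h2]

/-- override both legs of node `m` -/
def upd2 (m : V) (a b : Fin (val m)) (ω : CAsg V val) : CAsg V val :=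
  fun q => if h : q.1 = m then Fin.cast (congrArg val h).symm (if q.2 then b else a) else ω q

lemma upd2_false (m : V) (a b : Fin (val m)) (ω : CAsg V val) :
    upd2 m a b ω (m, false) = a := by
  unfold upd2
  rw [dif_pos rfl]
  exact Fin.ext (by simp)

lemma upd2_true (m : V) (a b : Fin (val m)) (ω : CAsg V val) :
    upd2 m a b ω (m, true) = b := by
  unfold upd2
  rw [dif_pos rfl]
  exact Fin.ext (by simp)

lemma upd2_ne (m : V) (a b : Fin (val m)) (ω : CAsg V val) {q : V × Bool}
    (h : q.1 ≠ m) : upd2 m a b ω q = ω q := dif_neg h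

lemma sum_ovr_pair (m : V) (L : Set (V × Bool)) (hL : ∀ q : V × Bool, q ∈ L ↔ q.1 = m)
    (H : CAsg V val → ℝ) (ω : CAsg V val) :
    ∑ t : (∀ q : ↥L, Fin (val q.1.1)), H (ovr L ω t)
      = ∑ a : Fin (val m), ∑ b : Fin (val m), H (upd2 m a b ω) := by
  let e : (∀ q : ↥L, Fin (val q.1.1)) ≃ (Fin (val m) × Fin (val m)) :=
    { toFun := fun t => (t ⟨(m, false), (hL _).mpr rfl⟩, t ⟨(m, true), (hL _).mpr rfl⟩),
      invFun := fun ab q =>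
        Fin.cast (congrArg val ((hL _).mp q.2)).symm (if q.1.2 then ab.2 else ab.1),
      left_inv := by
        intro t; funext q
        obtain ⟨⟨qv, qb⟩, h⟩ := q
        have h' : qv = m := (hL _).mp h
        subst h'
        cases qb
        · exact Fin.ext (by simp)
        · exact Fin.ext (by simp)
      right_inv := by
        intro ab
        refine Prod.ext (Fin.ext (by simp)) (Fin.ext (by simp)) }
  have h0 : ∑ t : (∀ q : ↥L, Fin (val q.1.1)), H (ovr L ω t)
      = ∑ s : Fin (val m) × Fin (val m), H (ovr L ω (e.symm s)) :=
    Fintype.sum_equiv e _ _ (fun t => by rw [Equiv.symm_apply_apply])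
  refine h0.trans ?_
  rw [Fintype.sum_prod_type]
  refine Finset.sum_congr rfl (fun a _ => Finset.sum_congr rfl (fun b _ => ?_))
  congr 1
  funext q
  by_cases h : q.1 = m
  · rw [ovr_mem _ _ _ ((hL q).mpr h)]
    have h2 : upd2 m a b ω q = Fin.cast (congrArg val h).symm (if q.2 then b else a) :=
      dif_pos h
    rw [h2]
    rfl
  · rw [ovr_not_mem _ _ _ (fun hq => h ((hL q).mp hq)), upd2_ne m a b ω h]

/-- override the input leg of node `m` -/
def upd1 (m : V) (a : Fin (val m)) (ω : CAsg V val) : CAsg V val :=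
  fun q => if h : q.1 = m ∧ q.2 = false then Fin.cast (congrArg val h.1).symm a else ω q

lemma upd1_in (m : V) (a : Fin (val m)) (ω : CAsg V val) :
    upd1 m a ω (m, false) = a := by
  unfold upd1
  rw [dif_pos ⟨rfl, rfl⟩]
  exact Fin.ext (by simp)

lemma upd1_other (m : V) (a : Fin (val m)) (ω : CAsg V val) {q : V × Bool}
    (h : ¬ (q.1 = m ∧ q.2 = false)) : upd1 m a ω q = ω q := dif_neg h

lemma sum_ovr_in (m : V) (L : Set (V × Bool))
    (hL : ∀ q : V × Bool, q ∈ L ↔ q.1 = m ∧ q.2 = false)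
    (H : CAsg V val → ℝ) (ω : CAsg V val) :
    ∑ t : (∀ q : ↥L, Fin (val q.1.1)), H (ovr L ω t)
      = ∑ a : Fin (val m), H (upd1 m a ω) := by
  let e : (∀ q : ↥L, Fin (val q.1.1)) ≃ Fin (val m) :=
    { toFun := fun t => t ⟨(m, false), (hL _).mpr ⟨rfl, rfl⟩⟩,
      invFun := fun a q => Fin.cast (congrArg val ((hL _).mp q.2).1).symm a,
      left_inv := by
        intro t; funext q
        obtain ⟨⟨qv, qb⟩, h⟩ := q
        obtain ⟨h1, h2⟩ := (hL _).mp h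
        have h1' : qv = m := h1
        have h2' : qb = false := h2
        subst h1'; subst h2'
        exact Fin.ext (by simp)
      right_inv := by
        intro a
        exact Fin.ext (by simp) }
  have h0 : ∑ t : (∀ q : ↥L, Fin (val q.1.1)), H (ovr L ω t)
      = ∑ s : Fin (val m), H (ovr L ω (e.symm s)) :=
    Fintype.sum_equiv e _ _ (fun t => by rw [Equiv.symm_apply_apply])
  refine h0.trans ?_
  refine Finset.sum_congr rfl (fun a _ => ?_)
  congr 1
  funext q
  by_cases h : q.1 = m ∧ q.2 = false
  · rw [ovr_mem _ _ _ ((hL q).mpr h)]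
    have h2 : upd1 m a ω q = Fin.cast (congrArg val h.1).symm a := dif_pos h
    rw [h2]
    rfl
  · rw [ovr_not_mem _ _ _ (fun hq => h ((hL q).mp hq)), upd1_other m a ω h]

end Alg
/-- **Analogue of rule 1 of the do-calculus for classical process maps.**
If `Y` and `Z` are d-separated by `W ∪ X` in the DAG obtained from `G` by deleting all
arrows into `X`, then for every classical process map Markov for `G` and every local
trace-preserving intervention at the remaining nodes `R`, the do-conditional marginal
`κ^{τ_R}_{YZW do(X)}` factorizes as `α · β` with `α` a function of the `Y`, `W`
variables and the `X` outputs only, and `β` a function of the `Z`, `W` variables and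
the `X` outputs only. -/
theorem rule1_classical
    {V : Type} [Fintype V] (val : V → ℕ) (hval : ∀ a, 0 < val a)
    (G : V → V → Prop) (hG : IsDAG G)
    (SY SZ SW SX : Set V)
    (hYZ : Disjoint SY SZ) (hYW : Disjoint SY SW) (hYX : Disjoint SY SX)
    (hZW : Disjoint SZ SW) (hZX : Disjoint SZ SX) (hWX : Disjoint SW SX)
    (hsep : DSep (fun a b => G a b ∧ b ∉ SX) SY SZ (SW ∪ SX)) :
    ∀ κ : CAsg V val → ℝ, IsCProcess val κ → CMarkovFor val G κ →
      ∀ locR : ∀ a, Fin (val a) → Fin (val a) → ℝ,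
        (∀ a ∈ (SY ∪ SZ ∪ SW ∪ SX)ᶜ, IsCChannel (locR a)) →
        ∃ α β : CAsg V val → ℝ,
          DependsOnlyOn
            {p : V × Bool | p.1 ∈ SY ∨ p.1 ∈ SW ∨ (p.1 ∈ SX ∧ p.2 = true)} α ∧
          DependsOnlyOn
            {p : V × Bool | p.1 ∈ SZ ∨ p.1 ∈ SW ∨ (p.1 ∈ SX ∧ p.2 = true)} β ∧
          ∀ ω, cDoMarg val κ SX ((SY ∪ SZ ∪ SW ∪ SX)ᶜ) locR ω = α ω * β ω := by
  classical
  intro κ hproc hMarkov locR hlocR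
  obtain ⟨pk, hpk0, hpk1, hform⟩ := hMarkov
  set Rset : Set V := (SY ∪ SZ ∪ SW ∪ SX)ᶜ with hRdef
  set G' : V → V → Prop := fun a b => G a b ∧ b ∉ SX with hG'def
  have hacyc : ∀ v, ¬ Relation.TransGen G' v v := fun v h =>
    hG v ((fun a b (h : Relation.TransGen G' a b) => (by induction h with | single hh => exact .single hh.1 | tail _ hh ih => exact ih.tail hh.1 : Relation.TransGen G a b)) v v h)
  have hhead' : ∀ a b, G' a b → b ∉ SX := fun a b h => h.2
  have hYW' : ∀ y ∈ SY, y ∉ SW ∪ SX := fun y hy h =>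
    h.elim (fun h' => Set.disjoint_left.mp hYW hy h')
      (fun h' => Set.disjoint_left.mp hYX hy h')
  have hZW' : ∀ z ∈ SZ, z ∉ SW ∪ SX := fun z hz h =>
    h.elim (fun h' => Set.disjoint_left.mp hZW hz h')
      (fun h' => Set.disjoint_left.mp hZX hz h')
  have hYZ' : ∀ y ∈ SY, y ∉ SZ := fun y hy hz => Set.disjoint_left.mp hYZ hy hz
  set An : Set V := AncT G' SY SZ SW with hAndef
  set RA : Set V := {v | v ∈ Rset ∧ v ∈ An} with hRAdef
  have hRAW : ∀ r ∈ RA, r ∉ SW ∪ SX := by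
    intro r hr hmem
    refine hr.1 ?_
    rcases hmem with h | h
    · exact Or.inl (Or.inr h)
    · exact Or.inr h
  set FAdj : V → V → Prop := FAdjR G' SY SZ SW RA with hFAdjdef
  set Reach : V → Prop := fun v => ∃ y ∈ SY, Relation.ReflTransGen FAdj y v with hReachdef
  have hKL : ∀ v, Reach v → v ∉ SZ ∧ ∀ z ∈ SZ, ¬ G' z v := by
    rintro v ⟨y, hy, hr⟩
    exact reach_safe G' SY SZ SW SX RA hacyc hhead' hYW' hZW' hYZ' hsep hRAW hy hr
  have hYsubAn : ∀ y ∈ SY, y ∈ An := fun y hy =>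
    ⟨y, by simp [hy], Relation.ReflTransGen.refl⟩
  have hZsubAn : ∀ z ∈ SZ, z ∈ An := fun z hz =>
    ⟨z, by simp [hz], Relation.ReflTransGen.refl⟩
  have hWsubAn : ∀ w ∈ SW, w ∈ An := fun w hw =>
    ⟨w, by simp [hw], Relation.ReflTransGen.refl⟩
  have hReachStep : ∀ u v, Reach u → FAdj u v → Reach v := by
    rintro u v ⟨y, hy, hr⟩ h
    exact ⟨y, hy, hr.tail h⟩
  have hSYReach : ∀ y ∈ SY, Reach y := fun y hy => ⟨y, hy, Relation.ReflTransGen.refl⟩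
  have hAnParent : ∀ j i, G' j i → i ∈ An → j ∈ An := by
    rintro j i h ⟨t, ht, hr⟩
    exact ⟨t, ht, Relation.ReflTransGen.head h hr⟩
  have hRcases : ∀ i : V, i ∈ SY ∨ i ∈ SZ ∨ i ∈ SW ∨ i ∈ SX ∨ i ∈ Rset := by
    intro i
    by_cases h : i ∈ SY ∪ SZ ∪ SW ∪ SX
    · rcases h with ((h | h) | h) | h
      · exact Or.inl h
      · exact Or.inr (Or.inl h)
      · exact Or.inr (Or.inr (Or.inl h))
      · exact Or.inr (Or.inr (Or.inr (Or.inl h)))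
    · exact Or.inr (Or.inr (Or.inr (Or.inr h)))
  have hRX : ∀ i ∈ Rset, i ∉ SX := fun i hi h => hi (Or.inr h)
  have hXR : ∀ i ∈ SX, i ∉ Rset := fun i hi h => hRX i h hi
  have hNAR : ∀ i, ¬ i ∈ SX → ¬ i ∈ An → i ∈ Rset := by
    intro i h1 h2
    rcases hRcases i with h | h | h | h | h
    · exact absurd (hYsubAn i h) h2
    · exact absurd (hZsubAn i h) h2
    · exact absurd (hWsubAn i h) h2
    · exact absurd h h1
    · exact h
  -- combined per-node factor
  set g : V → CAsg V val → ℝ := fun i σ =>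
    pk i (fun j => σ (j.1, true)) (σ (i, false)) *
      (if i ∈ Rset then locR i (σ (i, false)) (σ (i, true)) else 1) with hgdef
  have g_congr : ∀ (i : V) (σ σ' : CAsg V val), σ (i, false) = σ' (i, false) →
      (i ∈ Rset → σ (i, true) = σ' (i, true)) →
      (∀ j, G j i → σ (j, true) = σ' (j, true)) → g i σ = g i σ' := by
    intro i σ σ' h0 h1 hpa
    rw [hgdef]
    dsimp only
    rw [show (fun j : {j // G j i} => σ (j.1, true))
        = (fun j : {j // G j i} => σ' (j.1, true)) from
      funext (fun j => hpa j.1 j.2), h0]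
    by_cases hi : i ∈ Rset
    · rw [if_pos hi, if_pos hi, h1 hi]
    · rw [if_neg hi, if_neg hi]
  -- leg sets
  set Xin : Set (V × Bool) := {q | q.1 ∈ SX ∧ q.2 = false} with hXindef
  set LNA : Set (V × Bool) := {q | q.1 ∈ Rset ∧ q.1 ∉ An} with hLNAdef
  set La : Set (V × Bool) := {q | q.1 ∈ Rset ∧ q.1 ∈ An ∧ Reach q.1} with hLadef
  set Lb : Set (V × Bool) := {q | q.1 ∈ Rset ∧ q.1 ∈ An ∧ ¬ Reach q.1} with hLbdef
  set L0 : Set (V × Bool) := {q | (q.1 ∈ SX ∧ q.2 = false) ∨ (q.1 ∈ Rset ∧ q.1 ∉ An)}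
    with hL0def
  set Lab : Set (V × Bool) := {q | q.1 ∈ Rset ∧ q.1 ∈ An} with hLabdef
  set Lfull : Set (V × Bool) := {q : V × Bool | (q.1 ∈ SX ∧ q.2 = false) ∨ q.1 ∈ Rset}
    with hLfulldef
  -- node finsets
  set FX : Finset V := Finset.univ.filter (fun i => i ∈ SX) with hFXdef
  set FNA : Finset V := Finset.univ.filter (fun i => (¬ i ∈ SX) ∧ ¬ i ∈ An) with hFNAdef
  set FA : Finset V := Finset.univ.filter (fun i => ((¬ i ∈ SX) ∧ i ∈ An) ∧ Reach i)
    with hFAdef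
  set FB : Finset V := Finset.univ.filter (fun i => ((¬ i ∈ SX) ∧ i ∈ An) ∧ ¬ Reach i)
    with hFBdef
  have hFAmem : ∀ i ∈ FA, (¬ i ∈ SX) ∧ i ∈ An ∧ Reach i := by
    intro i hi
    rw [hFAdef, Finset.mem_filter] at hi
    exact ⟨hi.2.1.1, hi.2.1.2, hi.2.2⟩
  have hFBmem : ∀ i ∈ FB, (¬ i ∈ SX) ∧ i ∈ An ∧ ¬ Reach i := by
    intro i hi
    rw [hFBdef, Finset.mem_filter] at hi
    exact ⟨hi.2.1.1, hi.2.1.2, hi.2.2⟩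
  have hFNAmem : ∀ i ∈ FNA, (¬ i ∈ SX) ∧ ¬ i ∈ An := by
    intro i hi
    rw [hFNAdef, Finset.mem_filter] at hi
    exact hi.2
  -- product splitting
  have hsplit : ∀ σ : CAsg V val, ∏ i : V, g i σ =
      (∏ i ∈ FX, g i σ) * ((∏ i ∈ FA, g i σ) * (∏ i ∈ FB, g i σ) *
        (∏ i ∈ FNA, g i σ)) := by
    intro σ
    rw [← Finset.prod_filter_mul_prod_filter_not Finset.univ (fun i => i ∈ SX)
      (fun i => g i σ), ← hFXdef]
    congr 1
    rw [← Finset.prod_filter_mul_prod_filter_not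
      (Finset.univ.filter (fun i => ¬ i ∈ SX)) (fun i => i ∈ An) (fun i => g i σ),
      Finset.filter_filter, Finset.filter_filter, ← hFNAdef]
    congr 1
    rw [← Finset.prod_filter_mul_prod_filter_not
      (Finset.univ.filter (fun i => (¬ i ∈ SX) ∧ i ∈ An)) (fun i => Reach i)
      (fun i => g i σ), Finset.filter_filter, Finset.filter_filter, ← hFAdef, ← hFBdef]
  -- step 0: rewrite cDoMarg as a sum of products of g
  have hstep0 : ∀ ω : CAsg V val, cDoMarg val κ SX Rset locR ω =
      ∑ t : (∀ q : ↥Lfull, Fin (val q.1.1)), ∏ i : V, g i (ovr Lfull ω t) := by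
    intro ω
    unfold cDoMarg
    refine Finset.sum_congr rfl (fun t _ => ?_)
    rw [hform (ovr Lfull ω t)]
    have hloceq : ∀ a : ↥Rset,
        locR a.1 (t ⟨(a.1, false), Or.inr a.2⟩) (t ⟨(a.1, true), Or.inr a.2⟩)
          = locR a.1 ((ovr Lfull ω t) (a.1, false)) ((ovr Lfull ω t) (a.1, true)) := by
      intro a
      rw [ovr_mem Lfull ω t (show ((a.1 : V), false) ∈ Lfull from Or.inr a.2),
        ovr_mem Lfull ω t (show ((a.1 : V), true) ∈ Lfull from Or.inr a.2)]
    rw [Finset.prod_congr rfl (fun a _ => hloceq a)]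
    have hsub : (∏ a : ↥Rset,
        locR a.1 ((ovr Lfull ω t) (a.1, false)) ((ovr Lfull ω t) (a.1, true)))
        = ∏ i ∈ Finset.univ.filter (fun i => i ∈ Rset),
            locR i ((ovr Lfull ω t) (i, false)) ((ovr Lfull ω t) (i, true)) :=
      (Finset.prod_subtype (p := fun i => i ∈ Rset)
        (Finset.univ.filter (fun i => i ∈ Rset)) (fun x => by
        rw [Finset.mem_filter]
        exact ⟨fun h => h.2, fun h => ⟨Finset.mem_univ x, h⟩⟩)
        (fun i => locR i ((ovr Lfull ω t) (i, false)) ((ovr Lfull ω t) (i, true)))).symm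
    rw [hsub, Finset.prod_filter, ← Finset.prod_mul_distrib]
  -- summing out the X inputs
  have sumX : ∀ (n : ℕ) (S : Finset V), S.card = n → (∀ i ∈ S, i ∈ SX) →
      ∀ (L : Set (V × Bool)), (∀ q : V × Bool, q ∈ L ↔ (q.1 ∈ S ∧ q.2 = false)) →
      ∀ ω' : CAsg V val,
        (∑ tx : (∀ q : ↥L, Fin (val q.1.1)), ∏ i ∈ S, g i (ovr L ω' tx)) = 1 := by
    intro n
    induction n with
    | zero =>
        intro S hcard hsub L hL ω'
        obtain rfl : S = ∅ := Finset.card_eq_zero.mp hcard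
        haveI : IsEmpty ↥L := ⟨fun q => by have := (hL q.1).mp q.2; simp at this⟩
        simp
    | succ n ih =>
        intro S hcard hsub L hL ω'
        obtain ⟨m, hm⟩ := Finset.card_pos.mp (by omega : 0 < S.card)
        set L' : Set (V × Bool) := {q | q.1 ∈ S.erase m ∧ q.2 = false} with hL'def
        set Lm : Set (V × Bool) := {q | q.1 = m ∧ q.2 = false} with hLmdef
        have hLsplit : L = Lm ∪ L' := by
          ext q
          rw [hL]
          constructor
          · rintro ⟨h1, h2⟩
            by_cases hqm : q.1 = m
            · exact Or.inl ⟨hqm, h2⟩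
            · exact Or.inr ⟨Finset.mem_erase.mpr ⟨hqm, h1⟩, h2⟩
          · rintro (⟨h1, h2⟩ | ⟨h1, h2⟩)
            · exact ⟨h1 ▸ hm, h2⟩
            · exact ⟨(Finset.mem_erase.mp h1).2, h2⟩
        have hdisj : ∀ q, q ∈ Lm → q ∉ L' := fun q h1 h2 =>
          (Finset.mem_erase.mp h2.1).1 h1.1
        refine (sum_ovr_union L Lm L' hLsplit hdisj
          (fun σ => ∏ i ∈ S, g i σ) ω').trans ?_
        have hinner : ∀ t2 : (∀ q : ↥L', Fin (val q.1.1)),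
            (∑ t1 : (∀ q : ↥Lm, Fin (val q.1.1)),
              ∏ i ∈ S, g i (ovr Lm (ovr L' ω' t2) t1))
            = ∏ i ∈ S.erase m, g i (ovr L' ω' t2) := by
          intro t2
          have hrest : ∀ t1 : (∀ q : ↥Lm, Fin (val q.1.1)),
              ∏ i ∈ S.erase m, g i (ovr Lm (ovr L' ω' t2) t1)
                = ∏ i ∈ S.erase m, g i (ovr L' ω' t2) := by
            intro t1
            refine Finset.prod_congr rfl (fun i hi => ?_)
            have hine : i ≠ m := (Finset.mem_erase.mp hi).1
            refine g_congr i _ _ ?_ ?_ ?_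
            · exact ovr_not_mem _ _ _ (fun hq => hine hq.1)
            · intro _
              exact ovr_not_mem _ _ _ (fun hq => hine hq.1)
            · intro j _
              exact ovr_not_mem _ _ _ (fun hq => by
                have := hq.2; simp at this)
          calc (∑ t1 : (∀ q : ↥Lm, Fin (val q.1.1)),
                ∏ i ∈ S, g i (ovr Lm (ovr L' ω' t2) t1))
              = ∑ t1 : (∀ q : ↥Lm, Fin (val q.1.1)),
                  (g m (ovr Lm (ovr L' ω' t2) t1) * ∏ i ∈ S.erase m, g i (ovr L' ω' t2)) := by
                refine Finset.sum_congr rfl (fun t1 _ => ?_)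
                rw [← Finset.mul_prod_erase S _ hm, hrest t1]
            _ = (∑ t1 : (∀ q : ↥Lm, Fin (val q.1.1)), g m (ovr Lm (ovr L' ω' t2) t1)) *
                  ∏ i ∈ S.erase m, g i (ovr L' ω' t2) := by rw [Finset.sum_mul]
            _ = 1 * ∏ i ∈ S.erase m, g i (ovr L' ω' t2) := by
                congr 1
                refine ((sum_ovr_in m Lm (fun q => Iff.rfl)
                  (fun σ => g m σ) (ovr L' ω' t2)).trans ?_)
                have hgm : ∀ a : Fin (val m), g m (upd1 m a (ovr L' ω' t2)) =
                    pk m (fun j => (ovr L' ω' t2) (j.1, true)) a := by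
                  intro a
                  rw [hgdef]
                  dsimp only
                  rw [if_neg (hXR m (hsub m hm)), mul_one, upd1_in]
                  congr 1
                  funext j
                  exact upd1_other _ _ _ (fun hq => by have := hq.2; simp at this)
                rw [Finset.sum_congr rfl (fun a _ => hgm a)]
                exact hpk1 m _
            _ = ∏ i ∈ S.erase m, g i (ovr L' ω' t2) := one_mul _
        rw [Finset.sum_congr rfl (fun t2 _ => hinner t2)]
        exact ih (S.erase m) (by rw [Finset.card_erase_of_mem hm]; omega)
          (fun i hi => hsub i (Finset.mem_erase.mp hi).2) L' (fun q => Iff.rfl) ω'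
  -- summing out a set of R-nodes (both legs)
  have sumR : ∀ (n : ℕ) (S : Finset V), S.card = n → (∀ i ∈ S, i ∈ Rset) →
      ∀ (L : Set (V × Bool)), (∀ q : V × Bool, q ∈ L ↔ q.1 ∈ S) →
      ∀ ω' : CAsg V val,
        (∑ tr : (∀ q : ↥L, Fin (val q.1.1)), ∏ i ∈ S, g i (ovr L ω' tr)) = 1 := by
    intro n
    induction n with
    | zero =>
        intro S hcard hsub L hL ω'
        obtain rfl : S = ∅ := Finset.card_eq_zero.mp hcard
        haveI : IsEmpty ↥L := ⟨fun q => by have := (hL q.1).mp q.2; simp at this⟩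
        simp
    | succ n ih =>
        intro S hcard hsub L hL ω'
        have hne : S.Nonempty := Finset.card_pos.mp (by omega)
        have hwf : WellFounded (fun a b : V => Relation.TransGen G b a) := by
          have ht : IsTrans V (fun a b : V => Relation.TransGen G b a) :=
            ⟨fun a b c h1 h2 => h2.trans h1⟩
          have hi : IsIrrefl V (fun a b : V => Relation.TransGen G b a) :=
            ⟨fun a h => hG a h⟩
          exact Finite.wellFounded_of_trans_of_irrefl _
        obtain ⟨m, hm, hmax⟩ := hwf.has_min ↑S hne
        have hmax' : ∀ x ∈ S, ¬ Relation.TransGen G m x := fun x hx => hmax x hx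
        set L' : Set (V × Bool) := {q | q.1 ∈ S.erase m} with hL'def
        set Lm : Set (V × Bool) := {q | q.1 = m} with hLmdef
        have hLsplit : L = Lm ∪ L' := by
          ext q
          rw [hL]
          constructor
          · intro h1
            by_cases hqm : q.1 = m
            · exact Or.inl hqm
            · exact Or.inr (Finset.mem_erase.mpr ⟨hqm, h1⟩)
          · rintro (h1 | h1)
            · exact h1 ▸ hm
            · exact (Finset.mem_erase.mp h1).2
        have hdisj : ∀ q, q ∈ Lm → q ∉ L' := fun q h1 h2 =>
          (Finset.mem_erase.mp h2).1 h1
        refine (sum_ovr_union L Lm L' hLsplit hdisj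
          (fun σ => ∏ i ∈ S, g i σ) ω').trans ?_
        have hinner : ∀ t2 : (∀ q : ↥L', Fin (val q.1.1)),
            (∑ t1 : (∀ q : ↥Lm, Fin (val q.1.1)),
              ∏ i ∈ S, g i (ovr Lm (ovr L' ω' t2) t1))
            = ∏ i ∈ S.erase m, g i (ovr L' ω' t2) := by
          intro t2
          have hrest : ∀ t1 : (∀ q : ↥Lm, Fin (val q.1.1)),
              ∏ i ∈ S.erase m, g i (ovr Lm (ovr L' ω' t2) t1)
                = ∏ i ∈ S.erase m, g i (ovr L' ω' t2) := by
            intro t1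
            refine Finset.prod_congr rfl (fun i hi => ?_)
            have hiS : i ∈ S := (Finset.mem_erase.mp hi).2
            have hine : i ≠ m := (Finset.mem_erase.mp hi).1
            refine g_congr i _ _ ?_ ?_ ?_
            · exact ovr_not_mem _ _ _ (fun hq => hine hq)
            · intro _
              exact ovr_not_mem _ _ _ (fun hq => hine hq)
            · intro j hGj
              refine ovr_not_mem _ _ _ (fun hq => ?_)
              have : (j : V) = m := hq
              rw [this] at hGj
              exact hmax' i hiS (Relation.TransGen.single hGj)
          calc (∑ t1 : (∀ q : ↥Lm, Fin (val q.1.1)),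
                ∏ i ∈ S, g i (ovr Lm (ovr L' ω' t2) t1))
              = ∑ t1 : (∀ q : ↥Lm, Fin (val q.1.1)),
                  (g m (ovr Lm (ovr L' ω' t2) t1) * ∏ i ∈ S.erase m, g i (ovr L' ω' t2)) := by
                refine Finset.sum_congr rfl (fun t1 _ => ?_)
                rw [← Finset.mul_prod_erase S _ hm, hrest t1]
            _ = (∑ t1 : (∀ q : ↥Lm, Fin (val q.1.1)), g m (ovr Lm (ovr L' ω' t2) t1)) *
                  ∏ i ∈ S.erase m, g i (ovr L' ω' t2) := by rw [Finset.sum_mul]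
            _ = 1 * ∏ i ∈ S.erase m, g i (ovr L' ω' t2) := by
                congr 1
                refine ((sum_ovr_pair m Lm (fun q => Iff.rfl)
                  (fun σ => g m σ) (ovr L' ω' t2)).trans ?_)
                have hmR : m ∈ Rset := hsub m hm
                have hgm : ∀ (a b : Fin (val m)), g m (upd2 m a b (ovr L' ω' t2)) =
                    pk m (fun j => (ovr L' ω' t2) (j.1, true)) a * locR m a b := by
                  intro a b
                  rw [hgdef]
                  dsimp only
                  rw [if_pos hmR, upd2_false, upd2_true]
                  congr 2
                  funext j
                  refine upd2_ne _ _ _ _ (fun hq => ?_)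
                  have hGj := j.2
                  have hq' : (j : V) = m := hq
                  rw [hq'] at hGj
                  exact hG m (Relation.TransGen.single hGj)
                have hchan := hlocR m hmR
                calc (∑ a : Fin (val m), ∑ b : Fin (val m),
                      g m (upd2 m a b (ovr L' ω' t2)))
                    = ∑ a : Fin (val m), ∑ b : Fin (val m),
                        pk m (fun j => (ovr L' ω' t2) (j.1, true)) a * locR m a b := by
                      exact Finset.sum_congr rfl (fun a _ =>
                        Finset.sum_congr rfl (fun b _ => hgm a b))
                  _ = ∑ a : Fin (val m),
                        pk m (fun j => (ovr L' ω' t2) (j.1, true)) a *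
                          ∑ b : Fin (val m), locR m a b := by
                      exact Finset.sum_congr rfl (fun a _ => (Finset.mul_sum _ _ _).symm)
                  _ = ∑ a : Fin (val m), pk m (fun j => (ovr L' ω' t2) (j.1, true)) a := by
                      refine Finset.sum_congr rfl (fun a _ => ?_)
                      rw [hchan.2 a, mul_one]
                  _ = 1 := hpk1 m _
            _ = ∏ i ∈ S.erase m, g i (ovr L' ω' t2) := one_mul _
        rw [Finset.sum_congr rfl (fun t2 _ => hinner t2)]
        exact ih (S.erase m) (by rw [Finset.card_erase_of_mem hm]; omega)
          (fun i hi => hsub i (Finset.mem_erase.mp hi).2) L' (fun q => Iff.rfl) ω'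
  -- insensitivities
  have hFAins0 : ∀ (σ σ' : CAsg V val), (∀ q : V × Bool, q ∉ Xin → q ∉ LNA → σ q = σ' q) →
      ∀ (F : Finset V), (∀ i ∈ F, (¬ i ∈ SX) ∧ i ∈ An) →
      ∏ i ∈ F, g i σ = ∏ i ∈ F, g i σ' := by
    intro σ σ' hagree F hF
    refine Finset.prod_congr rfl (fun i hi => ?_)
    obtain ⟨hiX, hiAn⟩ := hF i hi
    refine g_congr i σ σ' ?_ ?_ ?_
    · exact hagree _ (fun h => hiX h.1) (fun h => h.2 hiAn)
    · intro _
      exact hagree _ (fun h => hiX h.1) (fun h => h.2 hiAn)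
    · intro j hGj
      have hjAn : j ∈ An := hAnParent j i ⟨hGj, hiX⟩ hiAn
      refine hagree _ (fun h => ?_) (fun h => h.2 hjAn)
      have := h.2; simp at this
  have hFNAins0 : ∀ (σ σ' : CAsg V val), (∀ q : V × Bool, q ∉ Xin → σ q = σ' q) →
      ∏ i ∈ FNA, g i σ = ∏ i ∈ FNA, g i σ' := by
    intro σ σ' hagree
    refine Finset.prod_congr rfl (fun i hi => ?_)
    obtain ⟨hiX, _⟩ := hFNAmem i hi
    refine g_congr i σ σ' ?_ ?_ ?_
    · exact hagree _ (fun h => hiX h.1)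
    · intro _
      exact hagree _ (fun h => hiX h.1)
    · intro j hGj
      refine hagree _ (fun h => ?_)
      have := h.2; simp at this
  have hFAinsLb : ∀ (σ σ' : CAsg V val), (∀ q : V × Bool, q ∉ Lb → σ q = σ' q) →
      ∏ i ∈ FA, g i σ = ∏ i ∈ FA, g i σ' := by
    intro σ σ' hagree
    refine Finset.prod_congr rfl (fun i hi => ?_)
    obtain ⟨hiX, hiAn, hiR⟩ := hFAmem i hi
    refine g_congr i σ σ' ?_ ?_ ?_
    · exact hagree _ (fun h => h.2.2 hiR)
    · intro _
      exact hagree _ (fun h => h.2.2 hiR)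
    · intro j hGj
      refine hagree _ (fun h => ?_)
      have hFadj : FAdj i j := ⟨hiAn, h.2.1, Or.inr (Or.inr ⟨⟨h.1, h.2.1⟩, ⟨hGj, hiX⟩⟩)⟩
      exact h.2.2 (hReachStep i j hiR hFadj)
  have hFBinsLa : ∀ (σ σ' : CAsg V val), (∀ q : V × Bool, q ∉ La → σ q = σ' q) →
      ∏ i ∈ FB, g i σ = ∏ i ∈ FB, g i σ' := by
    intro σ σ' hagree
    refine Finset.prod_congr rfl (fun i hi => ?_)
    obtain ⟨hiX, hiAn, hiR⟩ := hFBmem i hi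
    refine g_congr i σ σ' ?_ ?_ ?_
    · exact hagree _ (fun h => hiR h.2.2)
    · intro _
      exact hagree _ (fun h => hiR h.2.2)
    · intro j hGj
      refine hagree _ (fun h => ?_)
      have hFadj : FAdj j i := ⟨h.2.1, hiAn, Or.inr (Or.inl ⟨⟨h.1, h.2.1⟩, ⟨hGj, hiX⟩⟩)⟩
      exact hiR (hReachStep j i h.2.2 hFadj)
  -- the two factors
  set Af : CAsg V val → ℝ := fun ω =>
    ∑ ta : (∀ q : ↥La, Fin (val q.1.1)), ∏ i ∈ FA, g i (ovr La ω ta) with hAfdef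
  set Bf : CAsg V val → ℝ := fun ω =>
    ∑ tb : (∀ q : ↥Lb, Fin (val q.1.1)), ∏ i ∈ FB, g i (ovr Lb ω tb) with hBfdef
  refine ⟨Af, Bf, ?_, ?_, ?_⟩
  · -- α depends only on Y, W legs and X outputs
    intro ω ω' hag
    show (∑ ta : (∀ q : ↥La, Fin (val q.1.1)), ∏ i ∈ FA, g i (ovr La ω ta))
      = ∑ ta : (∀ q : ↥La, Fin (val q.1.1)), ∏ i ∈ FA, g i (ovr La ω' ta)
    refine Finset.sum_congr rfl (fun ta _ => ?_)
    have hkey : ∀ q : V × Bool, (q ∈ La ∨ ω q = ω' q) →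
        ovr La ω ta q = ovr La ω' ta q := by
      intro q hq
      by_cases h : q ∈ La
      · rw [ovr_mem _ _ _ h, ovr_mem _ _ _ h]
      · rw [ovr_not_mem _ _ _ h, ovr_not_mem _ _ _ h]
        exact hq.resolve_left h
    refine Finset.prod_congr rfl (fun i hi => ?_)
    obtain ⟨hiX, hiAn, hiR⟩ := hFAmem i hi
    refine g_congr i _ _ ?_ ?_ ?_
    · refine hkey _ ?_
      rcases hRcases i with h | h | h | h | h
      · exact Or.inr (hag _ (Or.inl h))
      · exact absurd h (hKL i hiR).1
      · exact Or.inr (hag _ (Or.inr (Or.inl h)))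
      · exact absurd h hiX
      · exact Or.inl ⟨h, hiAn, hiR⟩
    · intro hiRset
      exact hkey _ (Or.inl ⟨hiRset, hiAn, hiR⟩)
    · intro j hGj
      have hG'ji : G' j i := ⟨hGj, hiX⟩
      refine hkey _ ?_
      rcases hRcases j with h | h | h | h | h
      · exact Or.inr (hag _ (Or.inl h))
      · exact absurd hG'ji ((hKL i hiR).2 j h)
      · exact Or.inr (hag _ (Or.inr (Or.inl h)))
      · exact Or.inr (hag _ (Or.inr (Or.inr ⟨h, rfl⟩)))
      · have hjAn : j ∈ An := hAnParent j i hG'ji hiAn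
        have hFadj : FAdj i j := ⟨hiAn, hjAn, Or.inr (Or.inr ⟨⟨h, hjAn⟩, hG'ji⟩)⟩
        exact Or.inl ⟨h, hjAn, hReachStep i j hiR hFadj⟩
  · -- β depends only on Z, W legs and X outputs
    intro ω ω' hag
    show (∑ tb : (∀ q : ↥Lb, Fin (val q.1.1)), ∏ i ∈ FB, g i (ovr Lb ω tb))
      = ∑ tb : (∀ q : ↥Lb, Fin (val q.1.1)), ∏ i ∈ FB, g i (ovr Lb ω' tb)
    refine Finset.sum_congr rfl (fun tb _ => ?_)
    have hkey : ∀ q : V × Bool, (q ∈ Lb ∨ ω q = ω' q) →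
        ovr Lb ω tb q = ovr Lb ω' tb q := by
      intro q hq
      by_cases h : q ∈ Lb
      · rw [ovr_mem _ _ _ h, ovr_mem _ _ _ h]
      · rw [ovr_not_mem _ _ _ h, ovr_not_mem _ _ _ h]
        exact hq.resolve_left h
    refine Finset.prod_congr rfl (fun i hi => ?_)
    obtain ⟨hiX, hiAn, hiR⟩ := hFBmem i hi
    refine g_congr i _ _ ?_ ?_ ?_
    · refine hkey _ ?_
      rcases hRcases i with h | h | h | h | h
      · exact absurd (hSYReach i h) hiR
      · exact Or.inr (hag _ (Or.inl h))
      · exact Or.inr (hag _ (Or.inr (Or.inl h)))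
      · exact absurd h hiX
      · exact Or.inl ⟨h, hiAn, hiR⟩
    · intro hiRset
      exact hkey _ (Or.inl ⟨hiRset, hiAn, hiR⟩)
    · intro j hGj
      have hG'ji : G' j i := ⟨hGj, hiX⟩
      refine hkey _ ?_
      rcases hRcases j with h | h | h | h | h
      · have hjAn : j ∈ An := hYsubAn j h
        have hFadj : FAdj j i := ⟨hjAn, hiAn, Or.inl ⟨h, hG'ji⟩⟩
        exact absurd (hReachStep j i (hSYReach j h) hFadj) hiR
      · exact Or.inr (hag _ (Or.inl h))
      · exact Or.inr (hag _ (Or.inr (Or.inl h)))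
      · exact Or.inr (hag _ (Or.inr (Or.inr ⟨h, rfl⟩)))
      · have hjAn : j ∈ An := hAnParent j i hG'ji hiAn
        by_cases hjR : Reach j
        · have hFadj : FAdj j i := ⟨hjAn, hiAn, Or.inr (Or.inl ⟨⟨h, hjAn⟩, hG'ji⟩)⟩
          exact absurd (hReachStep j i hjR hFadj) hiR
        · exact Or.inl ⟨h, hjAn, hjR⟩
  · -- the factorization
    intro ω
    have hL1 : Lfull = L0 ∪ Lab := by
      ext q
      constructor
      · rintro (h | h)
        · exact Or.inl (Or.inl h)
        · by_cases hAn : q.1 ∈ An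
          · exact Or.inr ⟨h, hAn⟩
          · exact Or.inl (Or.inr ⟨h, hAn⟩)
      · rintro ((h | h) | h)
        · exact Or.inl h
        · exact Or.inr h.1
        · exact Or.inr h.1
    have hd1 : ∀ q, q ∈ L0 → q ∉ Lab := by
      rintro q (⟨h1, _⟩ | ⟨_, h2⟩) hm
      · exact hRX _ hm.1 h1
      · exact h2 hm.2
    have hL2 : L0 = Xin ∪ LNA := by
      ext q
      exact Iff.rfl
    have hd2 : ∀ q, q ∈ Xin → q ∉ LNA := fun q h1 h2 => hRX _ h2.1 h1.1
    have hL3 : Lab = La ∪ Lb := by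
      ext q
      constructor
      · rintro ⟨h1, h2⟩
        by_cases hR : Reach q.1
        · exact Or.inl ⟨h1, h2, hR⟩
        · exact Or.inr ⟨h1, h2, hR⟩
      · rintro (⟨h1, h2, _⟩ | ⟨h1, h2, _⟩)
        · exact ⟨h1, h2⟩
        · exact ⟨h1, h2⟩
    have hd3 : ∀ q, q ∈ La → q ∉ Lb := fun q h1 h2 => h2.2.2 h1.2.2
    have hXinFX : ∀ q : V × Bool, q ∈ Xin ↔ (q.1 ∈ FX ∧ q.2 = false) := by
      intro q
      rw [hFXdef]
      simp only [Finset.mem_filter, Finset.mem_univ, true_and]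
      exact Iff.rfl
    have hLNAFNA : ∀ q : V × Bool, q ∈ LNA ↔ q.1 ∈ FNA := by
      intro q
      rw [hFNAdef]
      simp only [Finset.mem_filter, Finset.mem_univ, true_and]
      constructor
      · rintro ⟨h1, h2⟩
        exact ⟨hRX _ h1, h2⟩
      · rintro ⟨h1, h2⟩
        exact ⟨hNAR _ h1 h2, h2⟩
    have hFXsub : ∀ i ∈ FX, i ∈ SX := by
      intro i hi
      rw [hFXdef, Finset.mem_filter] at hi
      exact hi.2
    have hFNAsub : ∀ i ∈ FNA, i ∈ Rset := by
      intro i hi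
      obtain ⟨h1, h2⟩ := hFNAmem i hi
      exact hNAR _ h1 h2
    -- inner L0 sum: kills FX and FNA
    have hinnerL0 : ∀ ω2 : CAsg V val,
        (∑ t0 : (∀ q : ↥L0, Fin (val q.1.1)), ∏ i : V, g i (ovr L0 ω2 t0))
          = (∏ i ∈ FA, g i ω2) * (∏ i ∈ FB, g i ω2) := by
      intro ω2
      refine ((sum_ovr_union L0 Xin LNA hL2 hd2 (fun σ => ∏ i : V, g i σ) ω2).trans ?_)
      have hper : ∀ tna : (∀ q : ↥LNA, Fin (val q.1.1)),
          (∑ tx : (∀ q : ↥Xin, Fin (val q.1.1)),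
            ∏ i : V, g i (ovr Xin (ovr LNA ω2 tna) tx))
          = ((∏ i ∈ FA, g i ω2) * (∏ i ∈ FB, g i ω2)) *
              (∏ i ∈ FNA, g i (ovr LNA ω2 tna)) := by
        intro tna
        have hterm : ∀ tx : (∀ q : ↥Xin, Fin (val q.1.1)),
            (∏ i : V, g i (ovr Xin (ovr LNA ω2 tna) tx))
            = (∏ i ∈ FX, g i (ovr Xin (ovr LNA ω2 tna) tx)) *
                (((∏ i ∈ FA, g i ω2) * (∏ i ∈ FB, g i ω2)) *
                  (∏ i ∈ FNA, g i (ovr LNA ω2 tna))) := by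
          intro tx
          rw [hsplit]
          congr 1
          have hagree0 : ∀ q : V × Bool, q ∉ Xin → q ∉ LNA →
              (ovr Xin (ovr LNA ω2 tna) tx) q = ω2 q := by
            intro q h1 h2
            rw [ovr_not_mem _ _ _ h1, ovr_not_mem _ _ _ h2]
          have hagree1 : ∀ q : V × Bool, q ∉ Xin →
              (ovr Xin (ovr LNA ω2 tna) tx) q = (ovr LNA ω2 tna) q := by
            intro q h1
            rw [ovr_not_mem _ _ _ h1]
          rw [hFAins0 _ _ hagree0 FA (fun i hi => ⟨(hFAmem i hi).1, (hFAmem i hi).2.1⟩),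
            hFAins0 _ _ hagree0 FB (fun i hi => ⟨(hFBmem i hi).1, (hFBmem i hi).2.1⟩),
            hFNAins0 _ _ hagree1]
        rw [Finset.sum_congr rfl (fun tx _ => hterm tx), ← Finset.sum_mul]
        rw [sumX FX.card FX rfl hFXsub Xin hXinFX (ovr LNA ω2 tna), one_mul]
      rw [Finset.sum_congr rfl (fun tna _ => hper tna), ← Finset.mul_sum]
      rw [sumR FNA.card FNA rfl hFNAsub LNA hLNAFNA ω2, mul_one]
    -- assemble
    calc cDoMarg val κ SX Rset locR ω
        = ∑ t : (∀ q : ↥Lfull, Fin (val q.1.1)), ∏ i : V, g i (ovr Lfull ω t) := hstep0 ω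
      _ = ∑ tab : (∀ q : ↥Lab, Fin (val q.1.1)),
            ∑ t0 : (∀ q : ↥L0, Fin (val q.1.1)),
              ∏ i : V, g i (ovr L0 (ovr Lab ω tab) t0) :=
          sum_ovr_union Lfull L0 Lab hL1 hd1 (fun σ => ∏ i : V, g i σ) ω
      _ = ∑ tab : (∀ q : ↥Lab, Fin (val q.1.1)),
            (∏ i ∈ FA, g i (ovr Lab ω tab)) * (∏ i ∈ FB, g i (ovr Lab ω tab)) :=
          Finset.sum_congr rfl (fun tab _ => hinnerL0 (ovr Lab ω tab))
      _ = ∑ tb : (∀ q : ↥Lb, Fin (val q.1.1)),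
            ∑ ta : (∀ q : ↥La, Fin (val q.1.1)),
              (∏ i ∈ FA, g i (ovr La (ovr Lb ω tb) ta)) *
                (∏ i ∈ FB, g i (ovr La (ovr Lb ω tb) ta)) :=
          sum_ovr_union Lab La Lb hL3 hd3
            (fun σ => (∏ i ∈ FA, g i σ) * (∏ i ∈ FB, g i σ)) ω
      _ = ∑ tb : (∀ q : ↥Lb, Fin (val q.1.1)),
            ∑ ta : (∀ q : ↥La, Fin (val q.1.1)),
              (∏ i ∈ FA, g i (ovr La ω ta)) * (∏ i ∈ FB, g i (ovr Lb ω tb)) := by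
          refine Finset.sum_congr rfl (fun tb _ => Finset.sum_congr rfl (fun ta _ => ?_))
          congr 1
          · refine hFAinsLb _ _ ?_
            intro q hq
            by_cases h : q ∈ La
            · rw [ovr_mem _ _ _ h, ovr_mem _ _ _ h]
            · rw [ovr_not_mem _ _ _ h, ovr_not_mem _ _ _ h, ovr_not_mem _ _ _ hq]
          · refine hFBinsLa _ _ ?_
            intro q hq
            rw [ovr_not_mem _ _ _ hq]
      _ = ∑ tb : (∀ q : ↥Lb, Fin (val q.1.1)),
            Af ω * (∏ i ∈ FB, g i (ovr Lb ω tb)) := by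
          refine Finset.sum_congr rfl (fun tb _ => ?_)
          rw [← Finset.sum_mul]
      _ = Af ω * Bf ω := by
          rw [← Finset.mul_sum]

end QCM
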